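/- arXiv:1307.5170 — 3 statements merged into one kernel-verified Lean document; each statement's English description precedes it below -/
import Mathlib

section
/- Let A be a commutative ring, let d ≥ 1 be an integer, and let M₁, …, M_{d+1} be d×d matrices over A. For a permutation σ in the symmetric group S_{d+1}, define T^σ(M₁,…,M_{d+1}) as the product, over the cycles (i₁ i₂ … i_r) of σ (fixed points counted as 1-cycles), of the traces tr(M_{i₁} M_{i₂} ⋯ M_{i_r}). Then ∑_{σ ∈ S_{d+1}} ε(σ) · T^σ(M₁,…,M_{d+1}) = 0, where ε(σ) is the signature of σ. In particular, for any group G and any group homomorphism ρ: G → GL_d(A), the function T = tr ∘ ρ satisfies ∑_{σ ∈ S_{d+1}} ε(σ) T^σ(g₁,…,g_{d+1}) = 0 for all g₁,…,g_{d+1} ∈ G, i.e. T is a pseudocharacter of dimension d. -/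
open scoped Classical

/-- Given a function `T` on a monoid `M` with values in a commutative monoid `A`,
a family `x : Fin n → M` and a permutation `σ` of `Fin n`, this is
`T^σ(x₁, …, xₙ) = ∏_{cycles (i₁ i₂ … i_r) of σ} T (x_{i₁} * x_{i₂} * ⋯ * x_{i_r})`,
fixed points counted as 1-cycles.  Each cycle is traversed starting from its minimal
element; the contribution of the orbit of `i` is recorded at the minimum of the orbit. -/
noncomputable def permCycleProd {M : Type*} [Monoid M] {A : Type*} [CommMonoid A]
    (T : M → A) {n : ℕ} (x : Fin n → M) (σ : Equiv.Perm (Fin n)) : A :=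
  ∏ i : Fin n,
    if ∀ k : ℕ, i ≤ (σ ^ k) i then
      T (((List.range ((Finset.range n).image fun k => (σ ^ k) i).card).map
            fun k => x ((σ ^ k) i)).prod)
    else 1

namespace FrobeniusPC

variable {A : Type} [CommRing A] {d : ℕ}

lemma entry_range_prod (p : ℕ) (N : ℕ → Matrix (Fin d) (Fin d) A) (a b : Fin d) :
    (((List.range p).map N).prod) a b
      = ∑ v : Fin (p + 1) → Fin d,
          if v 0 = a ∧ v (Fin.last p) = b then
            ∏ k : Fin p, N k (v k.castSucc) (v k.succ)
          else 0 := by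
  induction p generalizing b with
  | zero =>
    rw [Fintype.sum_equiv (Equiv.funUnique (Fin 1) (Fin d)) _
        (fun c : Fin d => if c = a ∧ c = b then 1 else 0) (fun v => by
          simp [Equiv.funUnique, Fin.last])]
    simp only [List.range_zero, List.map_nil, List.prod_nil, Matrix.one_apply]
    by_cases hab : a = b
    · subst hab; simp
    · rw [if_neg hab]
      refine (Finset.sum_eq_zero fun c _ => ?_).symm
      rw [if_neg]
      rintro ⟨rfl, rfl⟩; exact hab rfl
  | succ p ih =>
    have lhs :
        (((List.range (p+1)).map N).prod) a b
          = ∑ v : Fin (p + 1) → Fin d,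
              if v 0 = a then
                (∏ k : Fin p, N k (v k.castSucc) (v k.succ)) * N p (v (Fin.last p)) b
              else 0 := by
      rw [List.range_succ, List.map_append, List.prod_append, List.map_singleton,
        List.prod_singleton, Matrix.mul_apply]
      simp only [ih, Finset.sum_mul, ite_mul, zero_mul]
      rw [Finset.sum_comm]
      refine Finset.sum_congr rfl fun v _ => ?_
      by_cases h0 : v 0 = a
      · simp [h0]
      · simp [h0]
    rw [lhs]
    have rhs :
        (∑ v : Fin (p + 2) → Fin d,
          if v 0 = a ∧ v (Fin.last (p+1)) = b then
            ∏ k : Fin (p+1), N k (v k.castSucc) (v k.succ)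
          else 0)
        = ∑ v : Fin (p + 1) → Fin d,
            if v 0 = a then
              (∏ k : Fin p, N k (v k.castSucc) (v k.succ)) * N p (v (Fin.last p)) b
            else 0 := by
      rw [Fintype.sum_equiv (Fin.snocEquiv (fun _ : Fin (p + 2) => Fin d)).symm _
          (fun q : Fin d × (Fin (p + 1) → Fin d) =>
            if q.2 0 = a ∧ q.1 = b then
              (∏ k : Fin p, N k (q.2 k.castSucc) (q.2 k.succ)) * N p (q.2 (Fin.last p)) q.1
            else 0) (fun w => ?_)]
      · rw [Fintype.sum_prod_type, Finset.sum_comm]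
        refine Finset.sum_congr rfl fun v _ => ?_
        by_cases h0 : v 0 = a
        · simp only [h0, true_and]
          rw [Finset.sum_ite_eq' Finset.univ b
            (fun c => (∏ k : Fin p, N k (v k.castSucc) (v k.succ)) * N p (v (Fin.last p)) c)]
          simp
        · simp [h0]
      · -- matching step
        show _ = _
        simp only [Fin.snocEquiv, Equiv.coe_fn_symm_mk]
        by_cases hc : w 0 = a ∧ w (Fin.last (p+1)) = b
        · have hc' : Fin.init w 0 = a ∧ w (Fin.last (p+1)) = b := by
            simpa [Fin.init] using hc
          rw [if_pos hc]
          erw [if_pos hc']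
          rw [
            Fin.prod_univ_castSucc (fun k : Fin (p+1) => N (k:ℕ) (w k.castSucc) (w k.succ))]
          simp [Fin.init, Fin.succ_castSucc, -Fin.castSucc_succ]
        · have hc' : ¬ (Fin.init w 0 = a ∧ w (Fin.last (p+1)) = b) := by
            simpa [Fin.init] using hc
          rw [if_neg hc]
          erw [if_neg hc']
    exact rhs.symm

lemma trace_range_prod (p : ℕ) (hp : 0 < p) (N : ℕ → Matrix (Fin d) (Fin d) A) :
    (((List.range p).map N).prod).trace
      = ∑ g : Fin p → Fin d, ∏ k : Fin p,
          N k (g k) (g ⟨((k : ℕ) + 1) % p, Nat.mod_lt _ hp⟩) := by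
  obtain ⟨q, rfl⟩ : ∃ q, p = q + 1 := ⟨p - 1, (Nat.succ_pred_eq_of_pos hp).symm⟩
  rw [Matrix.trace]
  simp only [Matrix.diag, entry_range_prod]
  rw [Finset.sum_comm]
  have step1 :
      (∑ v : Fin (q + 2) → Fin d, ∑ a : Fin d,
        if v 0 = a ∧ v (Fin.last (q + 1)) = a then
          ∏ k : Fin (q + 1), N k (v k.castSucc) (v k.succ) else 0)
      = ∑ v : Fin (q + 2) → Fin d,
          if v (Fin.last (q + 1)) = v 0 then
            ∏ k : Fin (q + 1), N k (v k.castSucc) (v k.succ) else 0 := by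
    refine Finset.sum_congr rfl fun v _ => ?_
    simp only [ite_and]
    rw [Finset.sum_ite_eq Finset.univ (v 0)
      (fun a => if v (Fin.last (q + 1)) = a then
        ∏ k : Fin (q + 1), N k (v k.castSucc) (v k.succ) else 0)]
    simp
  rw [step1]
  rw [← Fintype.sum_equiv (Fin.snocEquiv (fun _ : Fin (q + 2) => Fin d))
      (fun z : Fin d × (Fin (q + 1) → Fin d) =>
        if (Fin.snoc z.2 z.1 : Fin (q+2) → Fin d) (Fin.last (q + 1))
            = (Fin.snoc z.2 z.1 : Fin (q+2) → Fin d) 0 then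
          ∏ k : Fin (q + 1), N k ((Fin.snoc z.2 z.1 : Fin (q+2) → Fin d) k.castSucc)
            ((Fin.snoc z.2 z.1 : Fin (q+2) → Fin d) k.succ) else 0)
      _ (fun z => rfl)]
  rw [Fintype.sum_prod_type, Finset.sum_comm]
  refine Finset.sum_congr rfl fun u _ => ?_
  have h0 : ∀ c : Fin d, (Fin.snoc u c : Fin (q+2) → Fin d) 0 = u 0 := by
    intro c
    have : (0 : Fin (q+2)) = Fin.castSucc (0 : Fin (q+1)) := rfl
    rw [this, Fin.snoc_castSucc]
  simp only [Fin.snoc_last, h0]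
  rw [Finset.sum_ite_eq' Finset.univ (u 0)
    (fun c => ∏ k : Fin (q + 1), N k ((Fin.snoc u c : Fin (q+2) → Fin d) k.castSucc)
      ((Fin.snoc u c : Fin (q+2) → Fin d) k.succ))]
  simp only [Finset.mem_univ, if_true]
  refine Finset.prod_congr rfl fun k _ => ?_
  rw [Fin.snoc_castSucc]
  congr 1
  by_cases hk : (k : ℕ) + 1 < q + 1
  · have h1 : k.succ = Fin.castSucc ⟨(k : ℕ) + 1, hk⟩ := by ext; simp
    rw [h1, Fin.snoc_castSucc]
    congr 1
    ext
    simp [Nat.mod_eq_of_lt hk]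
  · have hk' : (k : ℕ) + 1 = q + 1 := by omega
    have h1 : k.succ = Fin.last (q + 1) := by ext; simp [hk']
    rw [h1, Fin.snoc_last]
    congr 1
    ext
    simp [hk']

section

variable {n : ℕ} (σ : Equiv.Perm (Fin n))


/-- period of `i` under `σ` -/
noncomputable def per (i : Fin n) : ℕ := Function.minimalPeriod σ i

/-- orbit of `i` under `σ` -/
def orb (i : Fin n) : Finset (Fin n) := (Finset.range n).image fun k => (σ ^ k) i

lemma pow_apply_iterate (k : ℕ) (i : Fin n) : (σ ^ k) i = (⇑σ)^[k] i := rfl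

lemma mem_periodicPts (i : Fin n) : i ∈ Function.periodicPts ⇑σ := by
  refine ⟨orderOf σ, orderOf_pos σ, ?_⟩
  show (⇑σ)^[orderOf σ] i = i
  rw [← Equiv.Perm.coe_pow, pow_orderOf_eq_one]
  rfl

lemma per_pos (i : Fin n) : 0 < per σ i :=
  Function.minimalPeriod_pos_of_mem_periodicPts (mem_periodicPts σ i)

lemma iterate_per (i : Fin n) : (σ ^ per σ i) i = i := by
  rw [pow_apply_iterate]
  exact Function.iterate_minimalPeriod

lemma pow_apply_mod (k : ℕ) (i : Fin n) : (σ ^ (k % per σ i)) i = (σ ^ k) i := by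
  rw [pow_apply_iterate, pow_apply_iterate]
  exact Function.iterate_mod_minimalPeriod_eq

lemma pow_injOn (i : Fin n) :
    Set.InjOn (fun k => (σ ^ k) i) (Set.Iio (per σ i)) := by
  have := Function.iterate_injOn_Iio_minimalPeriod (f := ⇑σ) (x := i)
  intro a ha b hb hab
  exact this ha hb hab

lemma per_le (i : Fin n) : per σ i ≤ n := by
  have hcard : ((Finset.range (per σ i)).image fun k => (σ ^ k) i).card = per σ i := by
    rw [Finset.card_image_of_injOn, Finset.card_range]
    rw [Finset.coe_range]
    exact pow_injOn σ i
  calc per σ i = ((Finset.range (per σ i)).image fun k => (σ ^ k) i).card := hcard.symm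
    _ ≤ Fintype.card (Fin n) := Finset.card_le_univ _
    _ = n := Fintype.card_fin n

lemma mem_orb_iff {x i : Fin n} : x ∈ orb σ i ↔ ∃ k : ℕ, (σ ^ k) i = x := by
  constructor
  · rintro hx
    obtain ⟨k, -, rfl⟩ := Finset.mem_image.1 hx
    exact ⟨k, rfl⟩
  · rintro ⟨k, rfl⟩
    refine Finset.mem_image.2 ⟨k % per σ i, ?_, pow_apply_mod σ k i⟩
    exact Finset.mem_range.2 (lt_of_lt_of_le (Nat.mod_lt _ (per_pos σ i)) (per_le σ i))

lemma self_mem_orb (i : Fin n) : i ∈ orb σ i :=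
  (mem_orb_iff σ).2 ⟨0, by simp⟩

lemma orb_nonempty (i : Fin n) : (orb σ i).Nonempty := ⟨i, self_mem_orb σ i⟩

lemma orb_pow (k : ℕ) (i : Fin n) : orb σ ((σ ^ k) i) = orb σ i := by
  ext x
  simp only [mem_orb_iff]
  constructor
  · rintro ⟨l, rfl⟩
    exact ⟨l + k, by rw [pow_add, Equiv.Perm.mul_apply]⟩
  · rintro ⟨m, rfl⟩
    refine ⟨m + k * (per σ i - 1), ?_⟩
    rw [← Equiv.Perm.mul_apply, ← pow_add]
    have harith : m + k * (per σ i - 1) + k = m + k * per σ i := by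
      have h1 : k * (per σ i - 1) + k = k * per σ i := by
        rw [← Nat.mul_succ]
        congr 1
        have := per_pos σ i
        omega
      omega
    rw [harith, ← pow_apply_mod σ (m + k * per σ i) i, Nat.add_mul_mod_self_right,
      pow_apply_mod]

lemma card_orb (i : Fin n) : (orb σ i).card = per σ i := by
  have horb : orb σ i = (Finset.range (per σ i)).image fun k => (σ ^ k) i := by
    ext x
    constructor
    · intro hx
      obtain ⟨k, rfl⟩ := (mem_orb_iff σ).1 hx
      exact Finset.mem_image.2 ⟨k % per σ i,
        Finset.mem_range.2 (Nat.mod_lt _ (per_pos σ i)), pow_apply_mod σ k i⟩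
    · intro hx
      obtain ⟨k, -, rfl⟩ := Finset.mem_image.1 hx
      exact (mem_orb_iff σ).2 ⟨k, rfl⟩
  rw [horb, Finset.card_image_of_injOn, Finset.card_range]
  rw [Finset.coe_range]
  exact pow_injOn σ i

/-- minimal elements of orbits -/
noncomputable def mins : Finset (Fin n) := Finset.univ.filter fun i => ∀ k : ℕ, i ≤ (σ ^ k) i

lemma min'_orb_mem_mins (j : Fin n) :
    (orb σ j).min' (orb_nonempty σ j) ∈ mins σ := by
  obtain ⟨k₀, hk₀⟩ := (mem_orb_iff σ).1 (Finset.min'_mem (orb σ j) (orb_nonempty σ j))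
  refine Finset.mem_filter.2 ⟨Finset.mem_univ _, fun k => ?_⟩
  refine Finset.min'_le _ _ ?_
  rw [← hk₀, ← Equiv.Perm.mul_apply, ← pow_add]
  exact (mem_orb_iff σ).2 ⟨k + k₀, rfl⟩

lemma le_of_mem_mins {i : Fin n} (hi : i ∈ mins σ) {y : Fin n} (hy : y ∈ orb σ i) : i ≤ y := by
  obtain ⟨k, rfl⟩ := (mem_orb_iff σ).1 hy
  exact (Finset.mem_filter.1 hi).2 k

lemma eq_of_mem_mins_orb_eq {i i' : Fin n} (hi : i ∈ mins σ) (hi' : i' ∈ mins σ)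
    (h : orb σ i = orb σ i') : i = i' := by
  have h1 : i ≤ i' := le_of_mem_mins σ hi (h ▸ self_mem_orb σ i')
  have h2 : i' ≤ i := le_of_mem_mins σ hi' (h.symm ▸ self_mem_orb σ i)
  exact le_antisymm h1 h2

/-- Enumeration of `Fin n` by (orbit minimum, position in cycle). -/
noncomputable def cycEnum (s : Σ i : {x : Fin n // x ∈ mins σ}, Fin (per σ i.1)) : Fin n :=
  (σ ^ (s.2 : ℕ)) s.1.1

lemma cycEnum_bijective : Function.Bijective (cycEnum σ) := by
  constructor
  · rintro ⟨⟨i, hi⟩, k⟩ ⟨⟨i', hi'⟩, k'⟩ h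
    simp only [cycEnum] at h
    have horb : orb σ i = orb σ i' := by
      rw [← orb_pow σ (k : ℕ) i, ← orb_pow σ (k' : ℕ) i', h]
    have hii : i = i' := eq_of_mem_mins_orb_eq σ hi hi' horb
    subst hii
    have hkk : (k : ℕ) = (k' : ℕ) := by
      refine pow_injOn σ i k.isLt k'.isLt ?_
      exact h
    exact Sigma.ext rfl (by simpa using Fin.ext hkk)
  · intro j
    have hmm : (orb σ j).min' (orb_nonempty σ j) ∈ mins σ := min'_orb_mem_mins σ j
    obtain ⟨k₀, hk₀⟩ := (mem_orb_iff σ).1 (Finset.min'_mem (orb σ j) (orb_nonempty σ j))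
    have hj : j ∈ orb σ ((orb σ j).min' (orb_nonempty σ j)) := by
      rw [← hk₀, orb_pow]
      exact self_mem_orb σ j
    obtain ⟨l, hl⟩ := (mem_orb_iff σ).1 hj
    refine ⟨⟨⟨(orb σ j).min' (orb_nonempty σ j), hmm⟩,
      ⟨l % per σ ((orb σ j).min' (orb_nonempty σ j)), Nat.mod_lt _ (per_pos σ _)⟩⟩, ?_⟩
    simp only [cycEnum]
    rw [pow_apply_mod σ l _, hl]


/-- the contribution of the cycle through `i` for coloring `g` -/
noncomputable def F (M : Fin n → Matrix (Fin d) (Fin d) A) (i : Fin n)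
    (g : Fin (per σ i) → Fin d) : A :=
  ∏ k : Fin (per σ i),
    M ((σ ^ (k : ℕ)) i) (g k)
      (g ⟨((k : ℕ) + 1) % per σ i, Nat.mod_lt _ (per_pos σ i)⟩)

lemma permCycleProd_trace_eq (M : Fin n → Matrix (Fin d) (Fin d) A) :
    permCycleProd (fun m : Matrix (Fin d) (Fin d) A => m.trace) M σ
      = ∑ φ : Fin n → Fin d, ∏ j : Fin n, M j (φ j) (φ (σ j)) := by
  have hcard : ∀ i : Fin n, ((Finset.range n).image fun k => (σ ^ k) i).card = per σ i :=
    card_orb σ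
  have hterm : ∀ i : Fin n,
      (((List.range (per σ i)).map fun k => M ((σ ^ k) i)).prod).trace
        = ∑ g : Fin (per σ i) → Fin d, F σ M i g := fun i =>
    trace_range_prod (per σ i) (per_pos σ i) (fun k => M ((σ ^ k) i))
  calc permCycleProd (fun m : Matrix (Fin d) (Fin d) A => m.trace) M σ
      = ∏ i : Fin n, if (∀ k : ℕ, i ≤ (σ ^ k) i) then
          (∑ g : Fin (per σ i) → Fin d, F σ M i g) else 1 := by
        unfold permCycleProd
        refine Finset.prod_congr rfl fun i _ => ?_
        rw [hcard i]
        split_ifs with h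
        · exact hterm i
        · rfl
    _ = ∏ i ∈ mins σ, (∑ g : Fin (per σ i) → Fin d, F σ M i g) := by
        rw [mins, Finset.prod_filter]
    _ = ∏ i : {x : Fin n // x ∈ mins σ}, (∑ g : Fin (per σ i.1) → Fin d, F σ M i.1 g) := by
        rw [← Finset.prod_coe_sort]
    _ = ∑ G : ∀ i : {x : Fin n // x ∈ mins σ}, (Fin (per σ i.1) → Fin d),
          ∏ i : {x : Fin n // x ∈ mins σ}, F σ M i.1 (G i) := by
        rw [Fintype.prod_sum]
    _ = ∑ φ : Fin n → Fin d, ∏ j : Fin n, M j (φ j) (φ (σ j)) := by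
        refine (Fintype.sum_bijective
          (fun φ : Fin n → Fin d => fun i : {x : Fin n // x ∈ mins σ} =>
            fun k : Fin (per σ i.1) => φ ((σ ^ (k : ℕ)) i.1))
          ?_ _ _ (fun φ => ?_)).symm
        · constructor
          · intro φ φ' h
            funext j
            obtain ⟨s, rfl⟩ := (cycEnum_bijective σ).2 j
            exact congrFun (congrFun h s.1) s.2
          · intro G
            refine ⟨fun j => (fun s : Σ i : {x : Fin n // x ∈ mins σ}, Fin (per σ i.1) =>
              G s.1 s.2) ((Equiv.ofBijective _ (cycEnum_bijective σ)).symm j), ?_⟩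
            funext i k
            show (fun s : Σ i : {x : Fin n // x ∈ mins σ}, Fin (per σ i.1) => G s.1 s.2)
              ((Equiv.ofBijective _ (cycEnum_bijective σ)).symm ((σ ^ (k : ℕ)) i.1)) = G i k
            have : (σ ^ (k : ℕ)) i.1
                = Equiv.ofBijective _ (cycEnum_bijective σ) ⟨i, k⟩ := rfl
            rw [this, Equiv.symm_apply_apply]
        · -- matching
          rw [← Function.Bijective.prod_comp (cycEnum_bijective σ)
            (fun j => M j (φ j) (φ (σ j)))]
          rw [← Finset.univ_sigma_univ, Finset.prod_sigma]
          refine Finset.prod_congr rfl fun i _ => ?_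
          unfold F
          refine Finset.prod_congr rfl fun k _ => ?_
          show M ((σ ^ (k : ℕ)) i.1) (φ ((σ ^ (k : ℕ)) i.1)) (φ (σ ((σ ^ (k : ℕ)) i.1)))
            = M ((σ ^ (k : ℕ)) i.1) (φ ((σ ^ (k : ℕ)) i.1))
              (φ ((σ ^ (((k : ℕ) + 1) % per σ i.1)) i.1))
          rw [pow_apply_mod σ ((k : ℕ) + 1) i.1, pow_succ', Equiv.Perm.mul_apply]

theorem part1 (M : Fin (d + 1) → Matrix (Fin d) (Fin d) A) :
    ∑ σ : Equiv.Perm (Fin (d + 1)),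
      ((Equiv.Perm.sign σ : ℤ) : A) *
        permCycleProd (fun m : Matrix (Fin d) (Fin d) A => m.trace) M σ = 0 := by
  calc ∑ σ : Equiv.Perm (Fin (d + 1)),
        ((Equiv.Perm.sign σ : ℤ) : A) *
          permCycleProd (fun m : Matrix (Fin d) (Fin d) A => m.trace) M σ
      = ∑ σ : Equiv.Perm (Fin (d + 1)), ∑ φ : Fin (d + 1) → Fin d,
          ((Equiv.Perm.sign σ : ℤ) : A) * ∏ j : Fin (d + 1), M j (φ j) (φ (σ j)) := by
        refine Finset.sum_congr rfl fun σ _ => ?_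
        rw [permCycleProd_trace_eq σ M, Finset.mul_sum]
    _ = ∑ φ : Fin (d + 1) → Fin d, ∑ σ : Equiv.Perm (Fin (d + 1)),
          ((Equiv.Perm.sign σ : ℤ) : A) * ∏ j : Fin (d + 1), M j (φ j) (φ (σ j)) :=
        Finset.sum_comm
    _ = 0 := by
        refine Finset.sum_eq_zero fun φ _ => ?_
        obtain ⟨a, b, hab, hfab⟩ := Fintype.exists_ne_map_eq_of_card_lt φ (by simp)
        have hswap : ∀ x, φ (Equiv.swap a b x) = φ x := by
          intro x
          rcases eq_or_ne x a with rfl | hxa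
          · rw [Equiv.swap_apply_left, hfab]
          · rcases eq_or_ne x b with rfl | hxb
            · rw [Equiv.swap_apply_right, hfab]
            · rw [Equiv.swap_apply_of_ne_of_ne hxa hxb]
        refine Finset.sum_ninvolution (fun σ => Equiv.swap a b * σ) ?_ ?_
          (fun σ => Finset.mem_univ _) (fun σ => Equiv.swap_mul_self_mul a b σ)
        · intro σ
          have hsign : ((Equiv.Perm.sign (Equiv.swap a b * σ) : ℤ) : A)
              = -((Equiv.Perm.sign σ : ℤ) : A) := by
            rw [Equiv.Perm.sign_mul, Equiv.Perm.sign_swap hab]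
            push_cast
            ring
          have hprod : ∏ j : Fin (d + 1), M j (φ j) (φ ((Equiv.swap a b * σ) j))
              = ∏ j : Fin (d + 1), M j (φ j) (φ (σ j)) :=
            Finset.prod_congr rfl fun j _ => by rw [Equiv.Perm.mul_apply, hswap]
          rw [hsign, hprod]
          ring
        · intro σ _ h
          have h2 : Equiv.swap a b * σ = σ := h
          exact hab (Equiv.swap_eq_one_iff.1 (by
            calc Equiv.swap a b = Equiv.swap a b * σ * σ⁻¹ := by group
              _ = σ * σ⁻¹ := by rw [h2]
              _ = 1 := by group))

theorem part2 (G : Type) [Group G] (ρ : G →* Matrix.GeneralLinearGroup (Fin d) A)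
    (g : Fin (d + 1) → G) :
    ∑ σ : Equiv.Perm (Fin (d + 1)),
      ((Equiv.Perm.sign σ : ℤ) : A) *
        permCycleProd (fun h : G => ((ρ h : Matrix (Fin d) (Fin d) A)).trace) g σ = 0 := by
  have hpcp : ∀ σ : Equiv.Perm (Fin (d + 1)),
      permCycleProd (fun h : G => ((ρ h : Matrix (Fin d) (Fin d) A)).trace) g σ
        = permCycleProd (fun m : Matrix (Fin d) (Fin d) A => m.trace)
            (fun i => (ρ (g i) : Matrix (Fin d) (Fin d) A)) σ := by
    intro σ
    unfold permCycleProd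
    refine Finset.prod_congr rfl fun i _ => ?_
    split_ifs with h
    · beta_reduce
      congr 1
      have hcoe : ∀ x : G, (↑(ρ x) : Matrix (Fin d) (Fin d) A)
          = ((Units.coeHom (Matrix (Fin d) (Fin d) A)).comp ρ) x := fun _ => rfl
      rw [hcoe, map_list_prod, List.map_map]
      rfl
    · rfl
  calc ∑ σ : Equiv.Perm (Fin (d + 1)),
        ((Equiv.Perm.sign σ : ℤ) : A) *
          permCycleProd (fun h : G => ((ρ h : Matrix (Fin d) (Fin d) A)).trace) g σ
      = ∑ σ : Equiv.Perm (Fin (d + 1)),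
        ((Equiv.Perm.sign σ : ℤ) : A) *
          permCycleProd (fun m : Matrix (Fin d) (Fin d) A => m.trace)
            (fun i => (ρ (g i) : Matrix (Fin d) (Fin d) A)) σ :=
        Finset.sum_congr rfl fun σ _ => by rw [hpcp σ]
    _ = 0 := part1 _


end

end FrobeniusPC

/-- **(Frobenius)** For any `d + 1` square matrices `M₁, …, M_{d+1}` of size `d` over a
commutative ring `A`, one has `∑_{σ ∈ S_{d+1}} ε(σ) T^σ(M₁, …, M_{d+1}) = 0` where
`T^σ` is the product over the cycles of `σ` of the traces of the corresponding products.
In particular for a group homomorphism `ρ : G → GL_d(A)`, the function `T = tr ∘ ρ`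
is a pseudocharacter of dimension `d`. -/
theorem frobenius_pseudocharacter_identity {A : Type} [CommRing A] (d : ℕ) (hd : 1 ≤ d) :
    (∀ M : Fin (d + 1) → Matrix (Fin d) (Fin d) A,
      ∑ σ : Equiv.Perm (Fin (d + 1)),
        ((Equiv.Perm.sign σ : ℤ) : A) *
          permCycleProd (fun m : Matrix (Fin d) (Fin d) A => m.trace) M σ = 0) ∧
    (∀ (G : Type) [Group G] (ρ : G →* Matrix.GeneralLinearGroup (Fin d) A)
      (g : Fin (d + 1) → G),
      ∑ σ : Equiv.Perm (Fin (d + 1)),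
        ((Equiv.Perm.sign σ : ℤ) : A) *
          permCycleProd (fun h : G => ((ρ h : Matrix (Fin d) (Fin d) A)).trace) g σ = 0) :=
  ⟨FrobeniusPC.part1, fun G _ ρ g => FrobeniusPC.part2 G ρ g⟩
end

section
/- Let k be a field, G a group, and let V₁, V₂ be finite-dimensional semisimple k-linear representations of G. Let ω: G → kˣ be a group homomorphism (a one-dimensional character) such that ω^n is a nontrivial character for every integer n with 1 ≤ n ≤ dim V₁ + dim V₂. If the representations V₁ ⊕ (ω ⊗ V₁) and V₂ ⊕ (ω ⊗ V₂) are isomorphic, then V₁ and V₂ are isomorphic. -/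
open Module

namespace CancelAux

variable {k G : Type} [Field k] [Group G]


/-- The `k`-algebra endomorphism of `MonoidAlgebra k G` twisting by a character. -/
noncomputable def twistHom (χ : G →* kˣ) : (MonoidAlgebra k G) →ₐ[k] (MonoidAlgebra k G) :=
  MonoidAlgebra.lift k (MonoidAlgebra k G) G
    { toFun := fun g => MonoidAlgebra.single g ((χ g : k)),
      map_one' := by simp [MonoidAlgebra.one_def],
      map_mul' := fun g h => by
        simp [MonoidAlgebra.single_mul_single] }

@[simp] lemma twistHom_of (χ : G →* kˣ) (g : G) :
    twistHom χ (MonoidAlgebra.of k G g) = MonoidAlgebra.single g ((χ g : k)) := by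
  simp [twistHom]

lemma twistHom_single (χ : G →* kˣ) (g : G) (c : k) :
    twistHom χ (MonoidAlgebra.single g c) = MonoidAlgebra.single g (c * (χ g : k)) := by
  have h : MonoidAlgebra.single g c = c • MonoidAlgebra.single g (1 : k) := by
    rw [MonoidAlgebra.smul_single', mul_one]
  rw [h, map_smul]
  have h2 : twistHom χ (MonoidAlgebra.single g (1 : k)) = MonoidAlgebra.single g ((χ g : k)) :=
    twistHom_of χ g
  rw [h2, MonoidAlgebra.smul_single']

lemma twistHom_comp (χ χ' : G →* kˣ) :
    (twistHom (k := k) χ).comp (twistHom χ') = twistHom (χ' * χ) := by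
  apply MonoidAlgebra.algHom_ext
  intro g
  simp [twistHom_single, mul_comm]
  exact Subsingleton.elim _ _

lemma twistHom_one : twistHom (k := k) (G := G) 1 = AlgHom.id k (MonoidAlgebra k G) := by
  apply MonoidAlgebra.algHom_ext
  intro g
  simp [MonoidAlgebra.of_apply, twistHom_single]
  exact Subsingleton.elim _ _

lemma twistHom_twistHom (χ χ' : G →* kˣ) (a : (MonoidAlgebra k G)) :
    twistHom χ (twistHom χ' a) = twistHom (χ' * χ) a := by
  rw [← twistHom_comp]; rfl

lemma twistHom_inv_twistHom (χ : G →* kˣ) (a : (MonoidAlgebra k G)) :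
    twistHom χ⁻¹ (twistHom χ a) = a := by
  rw [twistHom_twistHom]
  have : χ * χ⁻¹ = 1 := mul_inv_cancel χ
  rw [this, twistHom_one]; rfl

lemma twistHom_twistHom_inv (χ : G →* kˣ) (a : (MonoidAlgebra k G)) :
    twistHom χ (twistHom χ⁻¹ a) = a := by
  rw [twistHom_twistHom]
  have : χ⁻¹ * χ = 1 := inv_mul_cancel χ
  rw [this, twistHom_one]; rfl

lemma twistHom_bijective (χ : G →* kˣ) : Function.Bijective (twistHom (k := k) χ) :=
  Function.bijective_iff_has_inverse.2
    ⟨twistHom χ⁻¹, twistHom_inv_twistHom χ, twistHom_twistHom_inv χ⟩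

instance twistHom_surjective (χ : G →* kˣ) :
    RingHomSurjective (twistHom (k := k) χ).toRingHom :=
  ⟨(twistHom_bijective χ).2⟩

/-- Type synonym: the module `S` with `MonoidAlgebra k G`-action twisted by `χ`. -/
@[nolint unusedArguments]
def TwistM (_χ : G →* kˣ) (S : Type) : Type := S

namespace TwistM

variable (χ : G →* kˣ) (S : Type) [AddCommGroup S] [Module (MonoidAlgebra k G) S]

instance : AddCommGroup (TwistM (k := k) χ S) := inferInstanceAs (AddCommGroup S)

noncomputable instance : Module (MonoidAlgebra k G) (TwistM (k := k) χ S) :=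
  Module.compHom S (twistHom χ).toRingHom

lemma smul_def (a : (MonoidAlgebra k G)) (s : S) :
    (a • (show TwistM (k := k) χ S from s)) = (show TwistM (k := k) χ S from twistHom χ a • s) :=
  rfl

variable (M : Type) [AddCommGroup M] [Module (MonoidAlgebra k G) M] [Module k M] [IsScalarTower k (MonoidAlgebra k G) M]

instance : Module k (TwistM (k := k) χ M) := inferInstanceAs (Module k M)

instance : IsScalarTower k (MonoidAlgebra k G) (TwistM (k := k) χ M) := by
  refine ⟨fun c a m => ?_⟩
  have h : twistHom χ (c • a) • (show M from m) = c • (twistHom χ a • (show M from m)) := by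
    rw [map_smul, smul_assoc]
  exact h

end TwistM

end CancelAux
section Part2

namespace CancelAux

variable {k G : Type} [Field k] [Group G]

namespace TwistM

variable (χ χ' : G →* kˣ)

/-- Twisting is functorial on isomorphisms (the underlying function is unchanged). -/
noncomputable def mapEquiv {P Q : Type} [AddCommGroup P] [AddCommGroup Q]
    [Module (MonoidAlgebra k G) P] [Module (MonoidAlgebra k G) Q]
    (f : P ≃ₗ[MonoidAlgebra k G] Q) :
    TwistM (k := k) χ P ≃ₗ[MonoidAlgebra k G] TwistM (k := k) χ Q where
  toFun p := show TwistM (k := k) χ Q from f (show P from p)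
  invFun q := show TwistM (k := k) χ P from f.symm (show Q from q)
  left_inv p := f.symm_apply_apply p
  right_inv q := f.apply_symm_apply q
  map_add' p p' := by exact f.map_add _ _
  map_smul' a p := by
    have h : f (twistHom χ a • (show P from p)) = twistHom χ a • f (show P from p) :=
      f.map_smul _ _
    exact h

/-- Composing two twists. -/
noncomputable def compEquiv (P : Type) [AddCommGroup P] [Module (MonoidAlgebra k G) P] :
    TwistM (k := k) χ (TwistM (k := k) χ' P) ≃ₗ[MonoidAlgebra k G]
      TwistM (k := k) (χ * χ') P where
  toFun p := show TwistM (k := k) (χ * χ') P from (show P from p)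
  invFun p := show TwistM (k := k) χ (TwistM (k := k) χ' P) from (show P from p)
  left_inv p := rfl
  right_inv p := rfl
  map_add' p p' := rfl
  map_smul' a p := by
    have h : twistHom χ' (twistHom χ a) • (show P from p)
        = twistHom (χ * χ') a • (show P from p) := by
      rw [twistHom_twistHom]
    exact h

/-- The trivial twist. -/
noncomputable def oneEquiv (P : Type) [AddCommGroup P] [Module (MonoidAlgebra k G) P] :
    TwistM (k := k) (1 : G →* kˣ) P ≃ₗ[MonoidAlgebra k G] P where
  toFun p := show P from p
  invFun p := show TwistM (k := k) (1 : G →* kˣ) P from p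
  left_inv p := rfl
  right_inv p := rfl
  map_add' p p' := rfl
  map_smul' a p := by
    have h : twistHom (1 : G →* kˣ) a • (show P from p) = a • (show P from p) := by
      rw [twistHom_one]; rfl
    exact h

/-- Twisting preserves simplicity. -/
lemma isSimpleModule (S : Type) [AddCommGroup S] [Module (MonoidAlgebra k G) S]
    [hS : IsSimpleModule (MonoidAlgebra k G) S] :
    IsSimpleModule (MonoidAlgebra k G) (TwistM (k := k) χ S) := by
  let l : S →ₛₗ[(twistHom (k := k) χ⁻¹).toRingHom] TwistM (k := k) χ S :=
    { toFun := fun s => show TwistM (k := k) χ S from s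
      map_add' := fun s t => rfl
      map_smul' := fun a s => by
        have h : (a • s : S) = twistHom χ (twistHom χ⁻¹ a) • s := by
          rw [twistHom_twistHom_inv]
        exact h }
  exact (LinearMap.isSimpleModule_iff_of_bijective l Function.bijective_id).mp hS

/-- Untwisting a linear map into a twisted module. -/
noncomputable def unTwistHomMap {S Q : Type} [AddCommGroup S] [AddCommGroup Q]
    [Module (MonoidAlgebra k G) S] [Module (MonoidAlgebra k G) Q]
    (f : S →ₗ[MonoidAlgebra k G] TwistM (k := k) χ Q) :
    TwistM (k := k) χ⁻¹ S →ₗ[MonoidAlgebra k G] Q where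
  toFun s := show Q from f (show S from s)
  map_add' s t := f.map_add _ _
  map_smul' a s := by
    have h : f (twistHom χ⁻¹ a • (show S from s))
        = twistHom χ (twistHom χ⁻¹ a) • (show Q from f (show S from s)) := f.map_smul _ _
    rw [twistHom_twistHom_inv] at h
    exact h

/-- Twist of a product. -/
noncomputable def prodEquiv (P Q : Type) [AddCommGroup P] [AddCommGroup Q]
    [Module (MonoidAlgebra k G) P] [Module (MonoidAlgebra k G) Q] :
    TwistM (k := k) χ (P × Q) ≃ₗ[MonoidAlgebra k G]
      (TwistM (k := k) χ P × TwistM (k := k) χ Q) where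
  toFun p := show TwistM (k := k) χ P × TwistM (k := k) χ Q from p
  invFun p := show TwistM (k := k) χ (P × Q) from p
  left_inv p := rfl
  right_inv p := rfl
  map_add' p p' := rfl
  map_smul' a p := rfl

end TwistM

end CancelAux

end Part2
section Part3

namespace CancelAux

variable {k G : Type} [Field k] [Group G]

section Hom

variable {S M N : Type} [AddCommGroup S] [Module (MonoidAlgebra k G) S]
  [AddCommGroup M] [Module (MonoidAlgebra k G) M] [Module k M]
  [IsScalarTower k (MonoidAlgebra k G) M]
  [AddCommGroup N] [Module (MonoidAlgebra k G) N] [Module k N]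
  [IsScalarTower k (MonoidAlgebra k G) N]

/-- Evaluation at a point, as a `k`-linear map on the space of `A`-linear maps. -/
noncomputable def evAt (s₀ : S) : (S →ₗ[MonoidAlgebra k G] M) →ₗ[k] M where
  toFun f := f s₀
  map_add' f g := rfl
  map_smul' c f := rfl

lemma homFinite [FiniteDimensional k M] (hS : IsSimpleModule (MonoidAlgebra k G) S) :
    FiniteDimensional k (S →ₗ[MonoidAlgebra k G] M) := by
  have : Nontrivial S := IsSimpleModule.nontrivial (MonoidAlgebra k G) S
  obtain ⟨s₀, hs₀⟩ := exists_ne (0 : S)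
  refine FiniteDimensional.of_injective (evAt s₀) ?_
  rw [← LinearMap.ker_eq_bot, LinearMap.ker_eq_bot']
  intro f hf
  haveI := hS
  rcases eq_bot_or_eq_top (LinearMap.ker f) with hker | hker
  · exfalso
    have hmem : s₀ ∈ LinearMap.ker f := hf
    rw [hker] at hmem
    exact hs₀ hmem
  · exact LinearMap.ker_eq_top.mp hker

lemma finrank_hom_pos [FiniteDimensional k M]
    (hS : IsSimpleModule (MonoidAlgebra k G) S)
    {f : S →ₗ[MonoidAlgebra k G] M} (hf : f ≠ 0) :
    0 < Module.finrank k (S →ₗ[MonoidAlgebra k G] M) := by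
  have := homFinite (M := M) hS
  have : Nontrivial (S →ₗ[MonoidAlgebra k G] M) := ⟨f, 0, hf⟩
  exact Module.finrank_pos

lemma finrank_hom_zero (hM : Subsingleton M) :
    Module.finrank k (S →ₗ[MonoidAlgebra k G] M) = 0 := by
  have : Subsingleton (S →ₗ[MonoidAlgebra k G] M) := by
    constructor
    intro f g
    ext s
    exact Subsingleton.elim _ _
  exact Module.finrank_zero_of_subsingleton

/-- Postcomposition with an `A`-linear iso, as a `k`-linear equivalence of hom spaces. -/
noncomputable def compLeftEquiv (u : M ≃ₗ[MonoidAlgebra k G] N) :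
    (S →ₗ[MonoidAlgebra k G] M) ≃ₗ[k] (S →ₗ[MonoidAlgebra k G] N) where
  toFun f := u.toLinearMap ∘ₗ f
  invFun g := u.symm.toLinearMap ∘ₗ g
  left_inv f := by ext s; simp
  right_inv g := by ext s; simp
  map_add' f g := by ext s; simp
  map_smul' c f := by
    ext s
    simp only [LinearMap.coe_comp, Function.comp_apply, LinearMap.smul_apply,
      LinearEquiv.coe_coe, RingHom.id_apply]
    rw [← algebraMap_smul (MonoidAlgebra k G) c (f s), map_smul,
      algebraMap_smul]

/-- Hom into a product, as a `k`-linear equivalence. -/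
noncomputable def homProdEquiv :
    (S →ₗ[MonoidAlgebra k G] (M × N)) ≃ₗ[k]
      (S →ₗ[MonoidAlgebra k G] M) × (S →ₗ[MonoidAlgebra k G] N) where
  toFun f := ((LinearMap.fst (MonoidAlgebra k G) M N) ∘ₗ f,
    (LinearMap.snd (MonoidAlgebra k G) M N) ∘ₗ f)
  invFun fg := fg.1.prod fg.2
  left_inv f := rfl
  right_inv fg := rfl
  map_add' f g := rfl
  map_smul' c f := rfl

lemma finrank_hom_prod [FiniteDimensional k M] [FiniteDimensional k N]
    (hS : IsSimpleModule (MonoidAlgebra k G) S) :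
    Module.finrank k (S →ₗ[MonoidAlgebra k G] (M × N))
      = Module.finrank k (S →ₗ[MonoidAlgebra k G] M)
        + Module.finrank k (S →ₗ[MonoidAlgebra k G] N) := by
  have h1 := homFinite (M := M) hS
  have h2 := homFinite (M := N) hS
  rw [LinearEquiv.finrank_eq (homProdEquiv (S := S) (M := M) (N := N)),
    Module.finrank_prod]

end Hom

end CancelAux

end Part3
section Part4

namespace CancelAux

variable {k G : Type} [Field k] [Group G]

section Dim

variable {M : Type} [AddCommGroup M] [Module (MonoidAlgebra k G) M] [Module k M]
  [IsScalarTower k (MonoidAlgebra k G) M]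

lemma findim_submodule [FiniteDimensional k M] (p : Submodule (MonoidAlgebra k G) M) :
    FiniteDimensional k p :=
  FiniteDimensional.of_injective (p.subtype.restrictScalars k) Subtype.val_injective

lemma finrank_eq_of_isCompl [FiniteDimensional k M]
    {p q : Submodule (MonoidAlgebra k G) M} (h : IsCompl p q) :
    Module.finrank k M = Module.finrank k p + Module.finrank k q := by
  haveI := findim_submodule (k := k) (G := G) p
  haveI := findim_submodule (k := k) (G := G) q
  have e := (Submodule.prodEquivOfIsCompl p q h).restrictScalars k
  rw [← LinearEquiv.finrank_eq e, Module.finrank_prod]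

end Dim

/-- **Key counting lemma**: pairwise non-isomorphic (no nonzero homs) simple submodules
of a semisimple module have total `k`-dimension at most `finrank k M`. -/
lemma sum_finrank_le :
    ∀ (m : ℕ) (M : Type) [AddCommGroup M] [Module (MonoidAlgebra k G) M] [Module k M]
      [IsScalarTower k (MonoidAlgebra k G) M] [FiniteDimensional k M]
      [IsSemisimpleModule (MonoidAlgebra k G) M]
      (X : Fin m → Submodule (MonoidAlgebra k G) M),
      (∀ i, IsSimpleModule (MonoidAlgebra k G) (X i)) →
      (∀ i j, i ≠ j → ∀ f : (X i) →ₗ[MonoidAlgebra k G] (X j), f = 0) →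
      ∑ i, Module.finrank k (X i) ≤ Module.finrank k M := by
  intro m
  induction m with
  | zero => intro M _ _ _ _ _ _ X _ _; simp
  | succ n IH =>
    intro M _ _ _ _ _ _ X hsimp hhom
    haveI : ∀ i, IsSimpleModule (MonoidAlgebra k G) (X i) := hsimp
    obtain ⟨C, hC⟩ := exists_isCompl (X 0)
    set proj := Submodule.linearProjOfIsCompl (X 0) C hC with hproj
    have hle : ∀ i : Fin n, X i.succ ≤ C := by
      intro i x hx
      have hzero : proj.comp ((X i.succ).subtype) = 0 :=
        hhom i.succ 0 (Fin.succ_ne_zero i) _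
      have hpx : proj x = 0 := by
        have := congrArg (fun f => f (⟨x, hx⟩ : X i.succ)) hzero
        simpa using this
      exact (Submodule.linearProjOfIsCompl_apply_eq_zero_iff hC).mp hpx
    let Y : Fin n → Submodule (MonoidAlgebra k G) C :=
      fun i => Submodule.comap C.subtype (X i.succ)
    let e : ∀ i : Fin n, (Y i) ≃ₗ[MonoidAlgebra k G] (X i.succ) :=
      fun i => Submodule.comapSubtypeEquivOfLe (hle i)
    haveI : FiniteDimensional k C := findim_submodule (k := k) (G := G) C
    have hYsimp : ∀ i, IsSimpleModule (MonoidAlgebra k G) (Y i) :=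
      fun i => IsSimpleModule.congr (e i)
    have hYhom : ∀ i j, i ≠ j → ∀ f : (Y i) →ₗ[MonoidAlgebra k G] (Y j), f = 0 := by
      intro i j hij f
      have hg : ((e j).toLinearMap ∘ₗ f) ∘ₗ (e i).symm.toLinearMap = 0 :=
        hhom i.succ j.succ (fun h => hij (Fin.succ_injective n h)) _
      ext y
      have := congrArg (fun F => F ((e i) y)) hg
      simp only [LinearMap.coe_comp, Function.comp_apply, LinearEquiv.coe_coe,
        LinearEquiv.symm_apply_apply, LinearMap.zero_apply] at this
      have hz : f y = 0 := by
        apply (e j).injective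
        simpa using this
      simpa using hz
    have hsum : ∑ i : Fin n, Module.finrank k (Y i) ≤ Module.finrank k C :=
      IH C Y hYsimp hYhom
    have hfr : ∀ i : Fin n, Module.finrank k (Y i) = Module.finrank k (X i.succ) := by
      intro i
      exact LinearEquiv.finrank_eq ((e i).restrictScalars k)
    rw [Fin.sum_univ_succ, finrank_eq_of_isCompl (k := k) (G := G) hC]
    have : ∑ i : Fin n, Module.finrank k (X i.succ) ≤ Module.finrank k C := by
      rw [← Finset.sum_congr rfl (fun i _ => hfr i)]
      exact hsum
    omega

end CancelAux

end Part4
section Part5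

namespace CancelAux

variable {k G : Type} [Field k] [Group G]

lemma simple_hom_injective {S M : Type} [AddCommGroup S] [Module (MonoidAlgebra k G) S]
    [AddCommGroup M] [Module (MonoidAlgebra k G) M]
    (hS : IsSimpleModule (MonoidAlgebra k G) S)
    {f : S →ₗ[MonoidAlgebra k G] M} (hf : f ≠ 0) : Function.Injective f := by
  haveI := hS
  rcases eq_bot_or_eq_top (LinearMap.ker f) with hker | hker
  · exact LinearMap.ker_eq_bot.mp hker
  · exact absurd (LinearMap.ker_eq_top.mp hker) hf

lemma subtype_ne_zero {M : Type} [AddCommGroup M] [Module (MonoidAlgebra k G) M]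
    (X : Submodule (MonoidAlgebra k G) M) [Nontrivial X] :
    (X.subtype : X →ₗ[MonoidAlgebra k G] M) ≠ 0 := by
  obtain ⟨x, hx⟩ := exists_ne (0 : X)
  intro h
  apply hx
  have := congrArg (fun f => f x) h
  simp only [Submodule.coe_subtype, LinearMap.zero_apply] at this
  exact Subtype.ext (by simpa using this)

lemma subsingleton_trans {M N : Type} [AddCommGroup M] [AddCommGroup N]
    [Module (MonoidAlgebra k G) M] [Module (MonoidAlgebra k G) N]
    [Module k M] [Module k N]
    [IsScalarTower k (MonoidAlgebra k G) M] [IsScalarTower k (MonoidAlgebra k G) N]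
    [FiniteDimensional k M] [FiniteDimensional k N]
    [IsSemisimpleModule (MonoidAlgebra k G) N]
    (hM : Subsingleton M)
    (H : ∀ (S : Type) [AddCommGroup S] [Module (MonoidAlgebra k G) S],
      IsSimpleModule (MonoidAlgebra k G) S →
      Module.finrank k (S →ₗ[MonoidAlgebra k G] M)
        = Module.finrank k (S →ₗ[MonoidAlgebra k G] N)) :
    Subsingleton N := by
  by_contra hN
  haveI : Nontrivial N := not_subsingleton_iff_nontrivial.mp hN
  obtain ⟨T, hT⟩ := IsSemisimpleModule.exists_simple_submodule (MonoidAlgebra k G) N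
  haveI := hT
  haveI : Nontrivial T := IsSimpleModule.nontrivial (MonoidAlgebra k G) T
  have h0 : Module.finrank k (T →ₗ[MonoidAlgebra k G] M) = 0 := finrank_hom_zero hM
  have hpos : 0 < Module.finrank k (T →ₗ[MonoidAlgebra k G] N) :=
    finrank_hom_pos hT (subtype_ne_zero T)
  rw [H T hT] at h0
  omega

noncomputable def equivOfSubsingleton {M N : Type} [AddCommGroup M] [AddCommGroup N]
    [Module (MonoidAlgebra k G) M] [Module (MonoidAlgebra k G) N]
    (hM : Subsingleton M) (hN : Subsingleton N) : M ≃ₗ[MonoidAlgebra k G] N where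
  toFun _ := 0
  invFun _ := 0
  left_inv x := Subsingleton.elim _ _
  right_inv x := Subsingleton.elim _ _
  map_add' _ _ := Subsingleton.elim _ _
  map_smul' _ _ := Subsingleton.elim _ _

set_option maxHeartbeats 1000000 in
/-- **Reconstruction lemma**: two finite-dimensional semisimple modules with the same
hom-space dimensions from every simple module are isomorphic. -/
lemma reconstruct :
    ∀ (n : ℕ) (M N : Type) [AddCommGroup M] [AddCommGroup N]
      [Module (MonoidAlgebra k G) M] [Module (MonoidAlgebra k G) N]
      [Module k M] [Module k N]
      [IsScalarTower k (MonoidAlgebra k G) M] [IsScalarTower k (MonoidAlgebra k G) N]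
      [FiniteDimensional k M] [FiniteDimensional k N]
      [IsSemisimpleModule (MonoidAlgebra k G) M] [IsSemisimpleModule (MonoidAlgebra k G) N],
      Module.finrank k M ≤ n →
      (∀ (S : Type) [AddCommGroup S] [Module (MonoidAlgebra k G) S],
        IsSimpleModule (MonoidAlgebra k G) S →
        Module.finrank k (S →ₗ[MonoidAlgebra k G] M)
          = Module.finrank k (S →ₗ[MonoidAlgebra k G] N)) →
      Nonempty (M ≃ₗ[MonoidAlgebra k G] N) := by
  intro n
  induction n with
  | zero =>
    intro M N _ _ _ _ _ _ _ _ _ _ _ _ hfr H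
    have hM : Subsingleton M := by
      rw [Nat.le_zero] at hfr
      exact Module.finrank_zero_iff.mp hfr
    exact ⟨equivOfSubsingleton hM (subsingleton_trans hM H)⟩
  | succ n IH =>
    intro M N _ _ _ _ _ _ _ _ _ _ _ _ hfr H
    by_cases hMs : Subsingleton M
    · exact ⟨equivOfSubsingleton hMs (subsingleton_trans hMs H)⟩
    haveI : Nontrivial M := not_subsingleton_iff_nontrivial.mp hMs
    obtain ⟨X, hX⟩ := IsSemisimpleModule.exists_simple_submodule (MonoidAlgebra k G) M
    haveI := hX
    haveI : Nontrivial X := IsSimpleModule.nontrivial (MonoidAlgebra k G) X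
    haveI : FiniteDimensional k X := findim_submodule (k := k) (G := G) X
    -- a nonzero hom from X to N
    have hpos : 0 < Module.finrank k (X →ₗ[MonoidAlgebra k G] M) :=
      finrank_hom_pos hX (subtype_ne_zero X)
    rw [H X hX] at hpos
    haveI := homFinite (M := N) hX
    haveI : Nontrivial (X →ₗ[MonoidAlgebra k G] N) := Module.finrank_pos_iff.mp hpos
    obtain ⟨φ, hφ⟩ := exists_ne (0 : X →ₗ[MonoidAlgebra k G] N)
    have hinj : Function.Injective φ := simple_hom_injective hX hφ
    set Y := LinearMap.range φ with hY
    let eXY : X ≃ₗ[MonoidAlgebra k G] Y := LinearEquiv.ofInjective φ hinj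
    haveI hYsimp : IsSimpleModule (MonoidAlgebra k G) Y := IsSimpleModule.congr eXY.symm
    obtain ⟨C, hCc⟩ := exists_isCompl X
    obtain ⟨D, hDc⟩ := exists_isCompl Y
    haveI : FiniteDimensional k C := findim_submodule (k := k) (G := G) C
    haveI : FiniteDimensional k D := findim_submodule (k := k) (G := G) D
    haveI : FiniteDimensional k Y := findim_submodule (k := k) (G := G) Y
    let u : (X × C) ≃ₗ[MonoidAlgebra k G] M := Submodule.prodEquivOfIsCompl _ _ hCc
    let v : (Y × D) ≃ₗ[MonoidAlgebra k G] N := Submodule.prodEquivOfIsCompl _ _ hDc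
    have H' : ∀ (S : Type) [AddCommGroup S] [Module (MonoidAlgebra k G) S],
        IsSimpleModule (MonoidAlgebra k G) S →
        Module.finrank k (S →ₗ[MonoidAlgebra k G] C)
          = Module.finrank k (S →ₗ[MonoidAlgebra k G] D) := by
      intro S _ _ hS
      have h1 : Module.finrank k (S →ₗ[MonoidAlgebra k G] M)
          = Module.finrank k (S →ₗ[MonoidAlgebra k G] X)
            + Module.finrank k (S →ₗ[MonoidAlgebra k G] C) := by
        rw [← LinearEquiv.finrank_eq (compLeftEquiv (S := S) u), finrank_hom_prod hS]
      have h2 : Module.finrank k (S →ₗ[MonoidAlgebra k G] N)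
          = Module.finrank k (S →ₗ[MonoidAlgebra k G] Y)
            + Module.finrank k (S →ₗ[MonoidAlgebra k G] D) := by
        rw [← LinearEquiv.finrank_eq (compLeftEquiv (S := S) v), finrank_hom_prod hS]
      have h3 : Module.finrank k (S →ₗ[MonoidAlgebra k G] X)
          = Module.finrank k (S →ₗ[MonoidAlgebra k G] Y) :=
        LinearEquiv.finrank_eq (compLeftEquiv (S := S) eXY)
      have h4 := H S hS
      rw [h1, h2, h3] at h4
      omega
    have hXpos : 0 < Module.finrank k X := Module.finrank_pos
    have hMfr : Module.finrank k M = Module.finrank k X + Module.finrank k C :=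
      finrank_eq_of_isCompl (k := k) (G := G) hCc
    have hCle : Module.finrank k C ≤ n := by omega
    obtain ⟨w⟩ := IH C D hCle H'
    exact ⟨(u.symm.trans (eXY.prodCongr w)).trans v⟩

end CancelAux

end Part5
section Part6

namespace CancelAux

variable {k G : Type} [Field k] [Group G]

instance asModule_tower {V : Type} [AddCommGroup V] [Module k V] (ρ : Representation k G V) :
    IsScalarTower k (MonoidAlgebra k G) ρ.asModule := by
  refine ⟨fun c a x => ?_⟩
  have h : ρ.asAlgebraHom (c • a) (show V from x) = c • (ρ.asAlgebraHom a (show V from x)) := by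
    rw [map_smul]; rfl
  exact h

instance asModule_findim {V : Type} [AddCommGroup V] [Module k V] [FiniteDimensional k V]
    (ρ : Representation k G V) : FiniteDimensional k ρ.asModule :=
  inferInstanceAs (FiniteDimensional k V)

lemma asModule_single_smul {V : Type} [AddCommGroup V] [Module k V]
    (ρ : Representation k G V) (g : G) (c : k) (x : V) :
    (MonoidAlgebra.single g c : MonoidAlgebra k G) • (show ρ.asModule from x)
      = (show ρ.asModule from c • ρ g x) := by
  have h : ρ.asAlgebraHom (MonoidAlgebra.single g c) x = c • ρ g x := by
    rw [Representation.asAlgebraHom_single]; rfl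
  exact h

lemma asModule_of_smul {V : Type} [AddCommGroup V] [Module k V]
    (ρ : Representation k G V) (g : G) (x : V) :
    (MonoidAlgebra.of k G g) • (show ρ.asModule from x) = (show ρ.asModule from ρ g x) := by
  have h := asModule_single_smul ρ g 1 x
  rw [one_smul] at h
  exact h

/-- A `k`-linear, `G`-equivariant equivalence between two modules over the monoid algebra
is automatically `MonoidAlgebra k G`-linear. -/
noncomputable def equivOfGEquivariant
    {P Q : Type} [AddCommGroup P] [AddCommGroup Q]
    [Module (MonoidAlgebra k G) P] [Module (MonoidAlgebra k G) Q]
    [Module k P] [Module k Q]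
    [IsScalarTower k (MonoidAlgebra k G) P] [IsScalarTower k (MonoidAlgebra k G) Q]
    (f : P ≃ₗ[k] Q)
    (hf : ∀ (g : G) (x : P),
      f ((MonoidAlgebra.of k G g) • x) = (MonoidAlgebra.of k G g) • f x) :
    P ≃ₗ[MonoidAlgebra k G] Q where
  toFun := f
  invFun := f.symm
  left_inv := f.left_inv
  right_inv := f.right_inv
  map_add' := f.map_add
  map_smul' a x := by
    show f (a • x) = a • f x
    induction a using MonoidAlgebra.induction_linear with
    | zero => rw [zero_smul, zero_smul, map_zero]
    | add a b ha hb => rw [add_smul, add_smul, map_add, ha, hb]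
    | single g c =>
      have hs : (MonoidAlgebra.single g c : MonoidAlgebra k G)
          = c • (MonoidAlgebra.of k G g) := by
        rw [MonoidAlgebra.of_apply, MonoidAlgebra.smul_single', mul_one]
      rw [hs, smul_assoc, smul_assoc, map_smul, hf]

end CancelAux

end Part6
section Part7

namespace CancelAux

variable {k G : Type} [Field k] [Group G]

namespace TwistM

instance finiteDimensional (χ : G →* kˣ) (M : Type) [AddCommGroup M]
    [Module (MonoidAlgebra k G) M] [Module k M] [IsScalarTower k (MonoidAlgebra k G) M]
    [FiniteDimensional k M] : FiniteDimensional k (TwistM (k := k) χ M) :=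
  inferInstanceAs (FiniteDimensional k M)

lemma finrank_eq (χ : G →* kˣ) (M : Type) [AddCommGroup M]
    [Module (MonoidAlgebra k G) M] [Module k M] [IsScalarTower k (MonoidAlgebra k G) M] :
    Module.finrank k (TwistM (k := k) χ M) = Module.finrank k M := rfl

/-- Equal characters give (the identity) equivalence of twists. -/
noncomputable def congrChar {χ χ' : G →* kˣ} (S : Type) [AddCommGroup S]
    [Module (MonoidAlgebra k G) S] (h : χ = χ') :
    TwistM (k := k) χ S ≃ₗ[MonoidAlgebra k G] TwistM (k := k) χ' S :=
  h ▸ LinearEquiv.refl (MonoidAlgebra k G) (TwistM (k := k) χ S)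

end TwistM

/-- A product of semisimple modules is semisimple. -/
lemma isSemisimpleModule_prod {P Q : Type} [AddCommGroup P] [AddCommGroup Q]
    [Module (MonoidAlgebra k G) P] [Module (MonoidAlgebra k G) Q]
    [IsSemisimpleModule (MonoidAlgebra k G) P] [IsSemisimpleModule (MonoidAlgebra k G) Q] :
    IsSemisimpleModule (MonoidAlgebra k G) (P × Q) := by
  refine isSemisimpleModule_of_isSemisimpleModule_submodule'
    (p := fun b : Bool => bif b then LinearMap.range (LinearMap.inl (MonoidAlgebra k G) P Q)
      else LinearMap.range (LinearMap.inr (MonoidAlgebra k G) P Q)) ?_ ?_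
  · intro b
    cases b
    · exact IsSemisimpleModule.congr
        (LinearEquiv.ofInjective _ (LinearMap.inr_injective (M := P) (M₂ := Q))).symm
    · exact IsSemisimpleModule.congr
        (LinearEquiv.ofInjective _ (LinearMap.inl_injective (M := P) (M₂ := Q))).symm
  · rw [iSup_bool_eq]
    simp only [cond_true, cond_false]
    exact LinearMap.sup_range_inl_inr

/-- The determinant trick: a module isomorphic to its own twist by `χ` forces
`χ` to be trivial to the power of the dimension. -/
lemma char_pow_eq_one_of_selfTwist {S : Type} [AddCommGroup S]
    [Module (MonoidAlgebra k G) S] [Module k S] [IsScalarTower k (MonoidAlgebra k G) S]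
    [FiniteDimensional k S] (χ : G →* kˣ)
    (T : S ≃ₗ[MonoidAlgebra k G] TwistM (k := k) χ S) (g : G) :
    ((χ g : k)) ^ (Module.finrank k S) = 1 := by
  -- T as a k-linear self equivalence
  let t : S ≃ₗ[k] S :=
    { toFun := fun x => show S from T x
      invFun := fun y => T.symm (show TwistM (k := k) χ S from y)
      left_inv := fun x => by simp
      right_inv := fun y => by
        have := T.apply_symm_apply (show TwistM (k := k) χ S from y)
        exact this
      map_add' := fun x y => T.map_add x y
      map_smul' := fun c x => by
        have h1 : T ((algebraMap k (MonoidAlgebra k G) c) • x)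
            = (algebraMap k (MonoidAlgebra k G) c) • T x := T.map_smul _ _
        rw [algebraMap_smul, algebraMap_smul] at h1
        exact h1 }
  -- the action of g as a k-linear self equivalence
  let u : S ≃ₗ[k] S :=
    { toFun := fun x => (MonoidAlgebra.of k G g) • x
      invFun := fun x => (MonoidAlgebra.of k G g⁻¹) • x
      left_inv := fun x => by
        show (MonoidAlgebra.of k G g⁻¹) • ((MonoidAlgebra.of k G g) • x) = x
        rw [smul_smul, ← map_mul, inv_mul_cancel, map_one, one_smul]
      right_inv := fun x => by
        show (MonoidAlgebra.of k G g) • ((MonoidAlgebra.of k G g⁻¹) • x) = x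
        rw [smul_smul, ← map_mul, mul_inv_cancel, map_one, one_smul]
      map_add' := fun x y => smul_add _ x y
      map_smul' := fun c x => smul_comm _ c x }
  -- the commutation relation
  have hrel : (t.toLinearMap) ∘ₗ (u.toLinearMap)
      = (χ g : k) • ((u.toLinearMap) ∘ₗ (t.toLinearMap)) := by
    ext x
    have h1 : T ((MonoidAlgebra.of k G g) • x)
        = twistHom χ (MonoidAlgebra.of k G g) • (show S from T x) := T.map_smul _ _
    rw [twistHom_of] at h1
    have h2 : (MonoidAlgebra.single g ((χ g : k)) : MonoidAlgebra k G) • (show S from T x)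
        = (χ g : k) • ((MonoidAlgebra.of k G g) • (show S from T x)) := by
      have hs : (MonoidAlgebra.single g ((χ g : k)) : MonoidAlgebra k G)
          = (χ g : k) • (MonoidAlgebra.of k G g) := by
        rw [MonoidAlgebra.of_apply, MonoidAlgebra.smul_single', mul_one]
      rw [hs, smul_assoc]
    simp only [LinearMap.coe_comp, Function.comp_apply, LinearEquiv.coe_coe,
      LinearMap.smul_apply]
    exact h1.trans h2
  -- determinants
  have hdet := congrArg LinearMap.det hrel
  rw [LinearMap.det_comp, LinearMap.det_smul, LinearMap.det_comp] at hdet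
  have ht : IsUnit (LinearMap.det t.toLinearMap) := t.isUnit_det'
  have hu : IsUnit (LinearMap.det u.toLinearMap) := u.isUnit_det'
  have hne : LinearMap.det t.toLinearMap * LinearMap.det u.toLinearMap ≠ 0 :=
    mul_ne_zero ht.ne_zero hu.ne_zero
  rw [mul_comm (LinearMap.det u.toLinearMap)] at hdet
  nth_rewrite 1 [show LinearMap.det t.toLinearMap * LinearMap.det u.toLinearMap
      = 1 * (LinearMap.det t.toLinearMap * LinearMap.det u.toLinearMap) from (one_mul _).symm]
      at hdet
  exact (mul_right_cancel₀ hne hdet.symm)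

end CancelAux

end Part7
section Part8

namespace CancelAux

variable {k G : Type} [Field k] [Group G]

lemma twist_of_smul {V : Type} [AddCommGroup V] [Module k V]
    (ρ : Representation k G V) (χ : G →* kˣ) (g : G) (x : V) :
    (MonoidAlgebra.of k G g) • (show TwistM (k := k) χ ρ.asModule from x)
      = (show TwistM (k := k) χ ρ.asModule from (χ g : k) • ρ g x) := by
  have h : twistHom χ (MonoidAlgebra.of k G g) • (show ρ.asModule from x)
      = (show ρ.asModule from (χ g : k) • ρ g x) := by
    rw [twistHom_of]
    exact asModule_single_smul ρ g _ x
  exact h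

lemma unTwistHomMap_ne_zero {S Q : Type} [AddCommGroup S] [AddCommGroup Q]
    [Module (MonoidAlgebra k G) S] [Module (MonoidAlgebra k G) Q] (χ : G →* kˣ)
    {f : S →ₗ[MonoidAlgebra k G] TwistM (k := k) χ Q} (hf : f ≠ 0) :
    TwistM.unTwistHomMap χ f ≠ 0 := by
  intro h
  apply hf
  ext s
  have := congrArg (fun F => F (show TwistM (k := k) χ⁻¹ S from s)) h
  exact this

section Main

variable {W₁ W₂ : Type}
  [AddCommGroup W₁] [Module k W₁] [AddCommGroup W₂] [Module k W₂]
  (ρ₁ : Representation k G W₁) (ρ₂ : Representation k G W₂)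
  (ω : G →* kˣ)
  (e : (W₁ × W₁) ≃ₗ[k] (W₂ × W₂))
  (he : ∀ (g : G) (x y : W₁),
      e (ρ₁ g x, (ω g : k) • ρ₁ g y) =
        (ρ₂ g (e (x, y)).1, (ω g : k) • ρ₂ g (e (x, y)).2))

/-- The `n`-twisted comparison isomorphism, as a map of monoid-algebra modules. -/
noncomputable def prodTwistEquiv (n : ℕ) :
    (TwistM (k := k) (ω ^ n) ρ₁.asModule × TwistM (k := k) (ω ^ (n+1)) ρ₁.asModule)
      ≃ₗ[MonoidAlgebra k G]
    (TwistM (k := k) (ω ^ n) ρ₂.asModule × TwistM (k := k) (ω ^ (n+1)) ρ₂.asModule) :=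
  equivOfGEquivariant
    (show (TwistM (k := k) (ω ^ n) ρ₁.asModule × TwistM (k := k) (ω ^ (n+1)) ρ₁.asModule) ≃ₗ[k]
        (TwistM (k := k) (ω ^ n) ρ₂.asModule × TwistM (k := k) (ω ^ (n+1)) ρ₂.asModule) from e)
    (by
      intro g p
      have hp : ∀ q : (TwistM (k := k) (ω ^ n) ρ₁.asModule
          × TwistM (k := k) (ω ^ (n+1)) ρ₁.asModule),
          (MonoidAlgebra.of k G g) • q
            = (show TwistM (k := k) (ω ^ n) ρ₁.asModule from ((ω ^ n) g : k) • ρ₁ g q.1,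
               show TwistM (k := k) (ω ^ (n+1)) ρ₁.asModule from ((ω ^ (n+1)) g : k) • ρ₁ g q.2) :=
        fun q => Prod.ext (twist_of_smul ρ₁ (ω ^ n) g q.1) (twist_of_smul ρ₁ (ω ^ (n+1)) g q.2)
      have hq : ∀ q : (TwistM (k := k) (ω ^ n) ρ₂.asModule
          × TwistM (k := k) (ω ^ (n+1)) ρ₂.asModule),
          (MonoidAlgebra.of k G g) • q
            = (show TwistM (k := k) (ω ^ n) ρ₂.asModule from ((ω ^ n) g : k) • ρ₂ g q.1,
               show TwistM (k := k) (ω ^ (n+1)) ρ₂.asModule from ((ω ^ (n+1)) g : k) • ρ₂ g q.2) :=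
        fun q => Prod.ext (twist_of_smul ρ₂ (ω ^ n) g q.1) (twist_of_smul ρ₂ (ω ^ (n+1)) g q.2)
      rw [hp, hq]
      show e (((ω ^ n) g : k) • ρ₁ g p.1, ((ω ^ (n+1)) g : k) • ρ₁ g p.2)
        = (((ω ^ n) g : k) • ρ₂ g (e p).1, ((ω ^ (n+1)) g : k) • ρ₂ g (e p).2)
      have hpow : ((ω ^ (n+1)) g : k) = ((ω ^ n) g : k) * (ω g : k) := by
        rw [MonoidHom.pow_apply, MonoidHom.pow_apply, pow_succ, Units.val_mul]
      obtain ⟨x₁, x₂⟩ := p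
      calc e (((ω ^ n) g : k) • ρ₁ g x₁, ((ω ^ (n+1)) g : k) • ρ₁ g x₂)
          = e (((ω ^ n) g : k) • (ρ₁ g x₁, (ω g : k) • ρ₁ g x₂)) := by
            rw [Prod.smul_mk, smul_smul, hpow]
        _ = ((ω ^ n) g : k) • e (ρ₁ g x₁, (ω g : k) • ρ₁ g x₂) := map_smul e _ _
        _ = ((ω ^ n) g : k) • (ρ₂ g (e (x₁, x₂)).1, (ω g : k) • ρ₂ g (e (x₁, x₂)).2) := by
            rw [he g x₁ x₂]
        _ = (((ω ^ n) g : k) • ρ₂ g (e (x₁, x₂)).1, ((ω ^ (n+1)) g : k) • ρ₂ g (e (x₁, x₂)).2) := by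
            rw [Prod.smul_mk, smul_smul, hpow])

end Main

end CancelAux

end Part8
section Part9

namespace CancelAux

variable {k G : Type} [Field k] [Group G]

section Main2

variable {W₁ W₂ : Type}
  [AddCommGroup W₁] [Module k W₁] [AddCommGroup W₂] [Module k W₂]
  (ρ₁ : Representation k G W₁) (ρ₂ : Representation k G W₂)
  (ω : G →* kˣ)

/-- Shifting a twist-equivalence. -/
noncomputable def shiftEquiv {S : Type} [AddCommGroup S] [Module (MonoidAlgebra k G) S]
    {i j : ℕ} (hij : i ≤ j)
    (E : TwistM (k := k) ((ω ^ i)⁻¹) S ≃ₗ[MonoidAlgebra k G] TwistM (k := k) ((ω ^ j)⁻¹) S) :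
    S ≃ₗ[MonoidAlgebra k G] TwistM (k := k) ((ω ^ (j - i))⁻¹) S := by
  have hchar : (ω ^ i) * (ω ^ j)⁻¹ = (ω ^ (j - i))⁻¹ := by
    have hj : (ω : G →* kˣ) ^ j = ω ^ (j - i) * ω ^ i := by
      rw [← pow_add ω, Nat.sub_add_cancel hij]
    ext g
    simp only [MonoidHom.mul_apply, MonoidHom.inv_apply, MonoidHom.pow_apply, hj]
    group
  exact ((((TwistM.oneEquiv S).symm.trans
      (TwistM.congrChar S (mul_inv_cancel (ω ^ i)).symm)).trans
      (TwistM.compEquiv (ω ^ i) ((ω ^ i)⁻¹) S).symm).trans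
      (TwistM.mapEquiv (ω ^ i) E)).trans
      ((TwistM.compEquiv (ω ^ i) ((ω ^ j)⁻¹) S).trans (TwistM.congrChar S hchar))

set_option maxHeartbeats 2000000 in
lemma hom_finrank_eq
    [FiniteDimensional k W₁] [FiniteDimensional k W₂]
    (e : (W₁ × W₁) ≃ₗ[k] (W₂ × W₂))
    (he : ∀ (g : G) (x y : W₁),
      e (ρ₁ g x, (ω g : k) • ρ₁ g y) =
        (ρ₂ g (e (x, y)).1, (ω g : k) • ρ₂ g (e (x, y)).2))
    (hss₁ : IsSemisimpleModule (MonoidAlgebra k G) ρ₁.asModule)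
    (hss₂ : IsSemisimpleModule (MonoidAlgebra k G) ρ₂.asModule)
    (hω : ∀ n : ℕ, 1 ≤ n → n ≤ Module.finrank k W₁ + Module.finrank k W₂ →
      ∃ g : G, (ω g) ^ n ≠ 1)
    (S : Type) [AddCommGroup S] [Module (MonoidAlgebra k G) S]
    (hS : IsSimpleModule (MonoidAlgebra k G) S) :
    Module.finrank k (S →ₗ[MonoidAlgebra k G] ρ₁.asModule)
      = Module.finrank k (S →ₗ[MonoidAlgebra k G] ρ₂.asModule) := by
  classical
  haveI := hS
  haveI := hss₁
  haveI := hss₂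
  by_contra hne
  -- the two sequences of hom-space dimensions
  set d : ℕ → ℕ := fun n =>
    Module.finrank k (S →ₗ[MonoidAlgebra k G] TwistM (k := k) (ω ^ n) ρ₁.asModule) with hd_def
  set c : ℕ → ℕ := fun n =>
    Module.finrank k (S →ₗ[MonoidAlgebra k G] TwistM (k := k) (ω ^ n) ρ₂.asModule) with hc_def
  have hkey : ∀ n, d n + d (n + 1) = c n + c (n + 1) := by
    intro n
    have h1 : Module.finrank k (S →ₗ[MonoidAlgebra k G]
        (TwistM (k := k) (ω ^ n) ρ₁.asModule × TwistM (k := k) (ω ^ (n+1)) ρ₁.asModule))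
        = d n + d (n + 1) := finrank_hom_prod hS
    have h2 : Module.finrank k (S →ₗ[MonoidAlgebra k G]
        (TwistM (k := k) (ω ^ n) ρ₂.asModule × TwistM (k := k) (ω ^ (n+1)) ρ₂.asModule))
        = c n + c (n + 1) := finrank_hom_prod hS
    have h3 := LinearEquiv.finrank_eq
      (compLeftEquiv (S := S) (prodTwistEquiv ρ₁ ρ₂ ω e he n))
    rw [h1, h2] at h3
    exact h3
  have hbase1 : d 0 = Module.finrank k (S →ₗ[MonoidAlgebra k G] ρ₁.asModule) :=
    LinearEquiv.finrank_eq (compLeftEquiv (S := S)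
      ((TwistM.congrChar ρ₁.asModule (pow_zero ω)).trans (TwistM.oneEquiv ρ₁.asModule)))
  have hbase2 : c 0 = Module.finrank k (S →ₗ[MonoidAlgebra k G] ρ₂.asModule) :=
    LinearEquiv.finrank_eq (compLeftEquiv (S := S)
      ((TwistM.congrChar ρ₂.asModule (pow_zero ω)).trans (TwistM.oneEquiv ρ₂.asModule)))
  have halt : ∀ n, d n ≠ c n := by
    intro n
    induction n with
    | zero => rw [hbase1, hbase2]; exact hne
    | succ m IH => have := hkey m; omega
  -- embeddings of the twisted simple modules into M₁ × M₂
  have hemb : ∀ n : ℕ, ∃ ψ : TwistM (k := k) ((ω ^ n)⁻¹) S →ₗ[MonoidAlgebra k G]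
      (ρ₁.asModule × ρ₂.asModule), Function.Injective ψ ∧ ψ ≠ 0 := by
    intro n
    haveI := TwistM.isSimpleModule (k := k) ((ω ^ n)⁻¹ : G →* kˣ) S
    have hcase : d n ≠ 0 ∨ c n ≠ 0 := by
      have := halt n; omega
    rcases hcase with h | h
    · haveI := homFinite (M := TwistM (k := k) (ω ^ n) ρ₁.asModule) hS
      haveI : Nontrivial (S →ₗ[MonoidAlgebra k G] TwistM (k := k) (ω ^ n) ρ₁.asModule) :=
        Module.finrank_pos_iff.mp (Nat.pos_of_ne_zero h)
      obtain ⟨φ, hφ⟩ := exists_ne (0 : S →ₗ[MonoidAlgebra k G]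
        TwistM (k := k) (ω ^ n) ρ₁.asModule)
      have hφ' := unTwistHomMap_ne_zero (ω ^ n) hφ
      refine ⟨(LinearMap.inl (MonoidAlgebra k G) ρ₁.asModule ρ₂.asModule)
        ∘ₗ TwistM.unTwistHomMap (ω ^ n) φ, ?_, ?_⟩
      · exact simple_hom_injective (by infer_instance) (by
          intro h0
          apply hφ'
          ext s
          have := congrArg (fun F => F s) h0
          simp only [LinearMap.coe_comp, Function.comp_apply, LinearMap.zero_apply] at this ⊢
          exact (Prod.mk.injEq _ _ _ _).mp this |>.1)
      · intro h0
        apply hφ'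
        ext s
        have := congrArg (fun F => F s) h0
        simp only [LinearMap.coe_comp, Function.comp_apply, LinearMap.zero_apply] at this ⊢
        exact (Prod.mk.injEq _ _ _ _).mp this |>.1
    · haveI := homFinite (M := TwistM (k := k) (ω ^ n) ρ₂.asModule) hS
      haveI : Nontrivial (S →ₗ[MonoidAlgebra k G] TwistM (k := k) (ω ^ n) ρ₂.asModule) :=
        Module.finrank_pos_iff.mp (Nat.pos_of_ne_zero h)
      obtain ⟨φ, hφ⟩ := exists_ne (0 : S →ₗ[MonoidAlgebra k G]
        TwistM (k := k) (ω ^ n) ρ₂.asModule)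
      have hφ' := unTwistHomMap_ne_zero (ω ^ n) hφ
      refine ⟨(LinearMap.inr (MonoidAlgebra k G) ρ₁.asModule ρ₂.asModule)
        ∘ₗ TwistM.unTwistHomMap (ω ^ n) φ, ?_, ?_⟩
      · exact simple_hom_injective (by infer_instance) (by
          intro h0
          apply hφ'
          ext s
          have := congrArg (fun F => F s) h0
          simp only [LinearMap.coe_comp, Function.comp_apply, LinearMap.zero_apply] at this ⊢
          exact (Prod.mk.injEq _ _ _ _).mp this |>.2)
      · intro h0
        apply hφ'
        ext s
        have := congrArg (fun F => F s) h0
        simp only [LinearMap.coe_comp, Function.comp_apply, LinearMap.zero_apply] at this ⊢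
        exact (Prod.mk.injEq _ _ _ _).mp this |>.2
  choose ψ hψinj hψne using hemb
  haveI : IsSemisimpleModule (MonoidAlgebra k G) (ρ₁.asModule × ρ₂.asModule) :=
    isSemisimpleModule_prod
  set X : ℕ → Submodule (MonoidAlgebra k G) (ρ₁.asModule × ρ₂.asModule) :=
    fun n => LinearMap.range (ψ n) with hX_def
  have eX : ∀ n, (TwistM (k := k) ((ω ^ n)⁻¹) S) ≃ₗ[MonoidAlgebra k G] (X n) :=
    fun n => LinearEquiv.ofInjective (ψ n) (hψinj n)
  haveI hXsimple : ∀ n, IsSimpleModule (MonoidAlgebra k G) (X n) := by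
    intro n
    haveI := TwistM.isSimpleModule (k := k) ((ω ^ n)⁻¹ : G →* kˣ) S
    exact IsSimpleModule.congr (eX n).symm
  haveI hXfin : ∀ n, FiniteDimensional k (X n) :=
    fun n => findim_submodule (k := k) (G := G) _
  haveI hXnontriv : ∀ n, Nontrivial (X n) :=
    fun n => IsSimpleModule.nontrivial (MonoidAlgebra k G) (X n)
  -- from a nonzero hom between different X's, a self-twist equivalence of X 0
  have h0char : (1 : G →* kˣ) = (ω ^ 0)⁻¹ := by ext g; simp
  have ES : S ≃ₗ[MonoidAlgebra k G] (X 0) :=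
    ((TwistM.oneEquiv S).symm.trans (TwistM.congrChar S h0char)).trans (eX 0)
  have hpair : ∀ i j : ℕ, i < j →
      ((∃ f : (X i) →ₗ[MonoidAlgebra k G] (X j), f ≠ 0) ∨
       (∃ f : (X j) →ₗ[MonoidAlgebra k G] (X i), f ≠ 0)) →
      Nonempty ((X 0) ≃ₗ[MonoidAlgebra k G] TwistM (k := k) ((ω ^ (j - i))⁻¹) (X 0)) := by
    intro i j hij hf
    haveI := TwistM.isSimpleModule (k := k) ((ω ^ i)⁻¹ : G →* kˣ) S
    haveI := TwistM.isSimpleModule (k := k) ((ω ^ j)⁻¹ : G →* kˣ) S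
    have hE : Nonempty ((TwistM (k := k) ((ω ^ i)⁻¹) S)
        ≃ₗ[MonoidAlgebra k G] (TwistM (k := k) ((ω ^ j)⁻¹) S)) := by
      rcases hf with ⟨f, hf0⟩ | ⟨f, hf0⟩
      · refine ⟨LinearEquiv.ofBijective (((eX j).symm.toLinearMap ∘ₗ f) ∘ₗ (eX i).toLinearMap)
          (LinearMap.bijective_of_ne_zero ?_)⟩
        intro h0
        apply hf0
        apply LinearMap.ext
        intro x
        have h1 := congrArg (fun F => F ((eX i).symm x)) h0
        simp only [LinearMap.coe_comp, Function.comp_apply, LinearEquiv.coe_coe,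
          LinearEquiv.apply_symm_apply, LinearMap.zero_apply] at h1
        exact (LinearEquiv.map_eq_zero_iff (eX j).symm).mp h1
      · refine ⟨(LinearEquiv.ofBijective (((eX i).symm.toLinearMap ∘ₗ f) ∘ₗ (eX j).toLinearMap)
          (LinearMap.bijective_of_ne_zero ?_)).symm⟩
        intro h0
        apply hf0
        apply LinearMap.ext
        intro x
        have h1 := congrArg (fun F => F ((eX j).symm x)) h0
        simp only [LinearMap.coe_comp, Function.comp_apply, LinearEquiv.coe_coe,
          LinearEquiv.apply_symm_apply, LinearMap.zero_apply] at h1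
        exact (LinearEquiv.map_eq_zero_iff (eX i).symm).mp h1
    obtain ⟨E⟩ := hE
    have hSE : S ≃ₗ[MonoidAlgebra k G] TwistM (k := k) ((ω ^ (j - i))⁻¹) S :=
      shiftEquiv ω (le_of_lt hij) E
    exact ⟨(ES.symm.trans hSE).trans (TwistM.mapEquiv ((ω ^ (j - i))⁻¹) ES)⟩
  -- pigeonhole: some self-twist exists
  set DD : ℕ := Module.finrank k W₁ + Module.finrank k W₂ with hDD_def
  have hMMfr : Module.finrank k (ρ₁.asModule × ρ₂.asModule) = DD := by
    rw [Module.finrank_prod]; rfl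
  have hQex : ∃ p : ℕ, 0 < p ∧
      Nonempty ((X 0) ≃ₗ[MonoidAlgebra k G] TwistM (k := k) ((ω ^ p)⁻¹) (X 0)) := by
    by_contra hno
    push_neg at hno
    have hnohom : ∀ i j : Fin (DD + 1), i ≠ j →
        ∀ f : (X i) →ₗ[MonoidAlgebra k G] (X j), f = 0 := by
      intro i j hij f
      by_contra hf0
      rcases lt_or_gt_of_ne (fun h => hij (Fin.ext h)) with h | h
      · obtain ⟨E⟩ := hpair i j h (Or.inl ⟨f, hf0⟩)
        exact (hno (j - i) (by omega)).false E
      · obtain ⟨E⟩ := hpair j i h (Or.inr ⟨f, hf0⟩)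
        exact (hno (i - j) (by omega)).false E
    have hsum0 := sum_finrank_le (DD + 1) (ρ₁.asModule × ρ₂.asModule)
      (fun i : Fin (DD + 1) => X i) (fun i => hXsimple i) hnohom
    rw [hMMfr] at hsum0
    have hsum : (∑ i : Fin (DD + 1), Module.finrank k (X i)) ≤ DD := hsum0
    have hone : ∀ i : Fin (DD + 1), 1 ≤ Module.finrank k (X i) := by
      intro i
      exact Module.finrank_pos
    have : (DD + 1 : ℕ) ≤ ∑ i : Fin (DD + 1), Module.finrank k (X i) := by
      calc (DD + 1 : ℕ) = ∑ _i : Fin (DD + 1), 1 := by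
            rw [Finset.sum_const, Finset.card_univ, Fintype.card_fin, smul_eq_mul, mul_one]
        _ ≤ _ := Finset.sum_le_sum (fun i _ => hone i)
    omega
  -- take the minimal period
  set dmin := Nat.find hQex with hdmin_def
  obtain ⟨hdpos, ⟨TT⟩⟩ := Nat.find_spec hQex
  have hmin : ∀ q, q < dmin → ¬(0 < q ∧
      Nonempty ((X 0) ≃ₗ[MonoidAlgebra k G] TwistM (k := k) ((ω ^ q)⁻¹) (X 0))) :=
    fun q hq => Nat.find_min hQex hq
  -- the first dmin modules are pairwise without homs
  have hnohom2 : ∀ i j : Fin dmin, i ≠ j →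
      ∀ f : (X i) →ₗ[MonoidAlgebra k G] (X j), f = 0 := by
    intro i j hij f
    by_contra hf0
    rcases lt_or_gt_of_ne (fun h => hij (Fin.ext h)) with h | h
    · obtain ⟨E⟩ := hpair i j h (Or.inl ⟨f, hf0⟩)
      exact hmin ((j : ℕ) - i) (by omega) ⟨by omega, ⟨E⟩⟩
    · obtain ⟨E⟩ := hpair j i h (Or.inr ⟨f, hf0⟩)
      exact hmin ((i : ℕ) - j) (by omega) ⟨by omega, ⟨E⟩⟩
  have hsum2' := sum_finrank_le dmin (ρ₁.asModule × ρ₂.asModule)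
    (fun i : Fin dmin => X i) (fun i => hXsimple i) hnohom2
  rw [hMMfr] at hsum2'
  have hsum2 : (∑ i : Fin dmin, Module.finrank k (X i)) ≤ DD := hsum2' 
  -- each X i has the same dimension as X 0
  have hfr : ∀ i : Fin dmin, Module.finrank k (X i) = Module.finrank k (X 0) := by
    intro i
    have E1 : (X (i : ℕ)) ≃ₗ[MonoidAlgebra k G] TwistM (k := k) ((ω ^ (i : ℕ))⁻¹) (X 0) :=
      ((eX i).symm).trans (TwistM.mapEquiv ((ω ^ (i : ℕ))⁻¹) ES)
    have := LinearEquiv.finrank_eq (E1.restrictScalars k)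
    rw [this, TwistM.finrank_eq]
  have hsum3 : dmin * Module.finrank k (X 0) ≤ DD := by
    calc dmin * Module.finrank k (X 0)
        = ∑ i : Fin dmin, Module.finrank k (X i) := by
          rw [Finset.sum_congr rfl (fun i _ => hfr i), Finset.sum_const, Finset.card_univ,
            Fintype.card_fin, smul_eq_mul]
      _ ≤ DD := hsum2
  have hm0 : 0 < Module.finrank k (X 0) := Module.finrank_pos
  -- the determinant contradiction
  obtain ⟨g, hg⟩ := hω (dmin * Module.finrank k (X 0))
    (Nat.mul_pos hdpos hm0) hsum3
  have hdet := char_pow_eq_one_of_selfTwist ((ω ^ dmin)⁻¹) TT g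
  apply hg
  have hval : (((ω ^ dmin)⁻¹ : G →* kˣ) g : k) = (((ω g) ^ dmin : kˣ)⁻¹ : kˣ) := by
    rw [MonoidHom.inv_apply, MonoidHom.pow_apply]
  rw [hval] at hdet
  have : ((((ω g) ^ dmin : kˣ)⁻¹ : kˣ) ^ (Module.finrank k (X 0)) : kˣ) = 1 := by
    apply Units.ext
    push_cast
    exact_mod_cast hdet
  have h4 : ((((ω g) ^ dmin) ^ (Module.finrank k (X 0)) : kˣ))⁻¹ = 1 := by
    rw [← inv_pow]; exact this
  rw [pow_mul]
  exact inv_eq_one.mp h4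

end Main2

end CancelAux

end Part9
/-- **(Cancellation lemma, Chenevier–Lannes)** Let `V₁, V₂` be finite-dimensional
semisimple representations of a group `G` over a field `k`, and let `ω : G → kˣ` be a
character with `ω^n` nontrivial for `1 ≤ n ≤ dim V₁ + dim V₂`.  If
`V₁ ⊕ (ω ⊗ V₁) ≅ V₂ ⊕ (ω ⊗ V₂)` then `V₁ ≅ V₂`. -/
theorem semisimple_rep_cancellation
    (k G W₁ W₂ : Type) [Field k] [Group G]
    [AddCommGroup W₁] [Module k W₁] [FiniteDimensional k W₁]
    [AddCommGroup W₂] [Module k W₂] [FiniteDimensional k W₂]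
    (ρ₁ : Representation k G W₁) (ρ₂ : Representation k G W₂)
    (hss₁ : IsSemisimpleModule (MonoidAlgebra k G) ρ₁.asModule)
    (hss₂ : IsSemisimpleModule (MonoidAlgebra k G) ρ₂.asModule)
    (ω : G →* kˣ)
    (hω : ∀ n : ℕ, 1 ≤ n → n ≤ Module.finrank k W₁ + Module.finrank k W₂ →
      ∃ g : G, (ω g) ^ n ≠ 1)
    (hiso : ∃ e : (W₁ × W₁) ≃ₗ[k] (W₂ × W₂),
      ∀ (g : G) (x y : W₁),
        e (ρ₁ g x, (ω g : k) • ρ₁ g y) =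
          (ρ₂ g (e (x, y)).1, (ω g : k) • ρ₂ g (e (x, y)).2)) :
    ∃ e : W₁ ≃ₗ[k] W₂, ∀ (g : G) (x : W₁), e (ρ₁ g x) = ρ₂ g (e x) := by
  classical
  obtain ⟨e, he⟩ := hiso
  haveI := hss₁
  haveI := hss₂
  have H : ∀ (S : Type) [AddCommGroup S] [Module (MonoidAlgebra k G) S],
      IsSimpleModule (MonoidAlgebra k G) S →
      Module.finrank k (S →ₗ[MonoidAlgebra k G] ρ₁.asModule)
        = Module.finrank k (S →ₗ[MonoidAlgebra k G] ρ₂.asModule) := by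
    intro S _ _ hS
    exact CancelAux.hom_finrank_eq ρ₁ ρ₂ ω e he hss₁ hss₂ hω S hS
  obtain ⟨F⟩ := CancelAux.reconstruct (Module.finrank k ρ₁.asModule)
    ρ₁.asModule ρ₂.asModule le_rfl H
  refine ⟨{ toFun := fun x => show W₂ from F (show ρ₁.asModule from x)
            invFun := fun y => show W₁ from F.symm (show ρ₂.asModule from y)
            left_inv := fun x => F.symm_apply_apply x
            right_inv := fun y => F.apply_symm_apply y
            map_add' := F.map_add
            map_smul' := fun c x => by
              have h1 : F ((algebraMap k (MonoidAlgebra k G) c) • (show ρ₁.asModule from x))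
                  = (algebraMap k (MonoidAlgebra k G) c) • F (show ρ₁.asModule from x) :=
                F.map_smul _ _
              rw [algebraMap_smul, algebraMap_smul] at h1
              exact h1 }, ?_⟩
  intro g x
  have h2 : F ((MonoidAlgebra.of k G g) • (show ρ₁.asModule from x))
      = (MonoidAlgebra.of k G g) • F (show ρ₁.asModule from x) := F.map_smul _ _
  rw [CancelAux.asModule_of_smul ρ₁ g x] at h2
  exact h2.trans (CancelAux.asModule_of_smul ρ₂ g _)
end

section
/- Let p be an odd prime, let V be a finite-dimensional 𝔽_p-vector space of dimension > 1, and let u ∈ GL(V) be an element of odd finite order m having no nonzero fixed vector (i.e. 1 is not an eigenvalue of u). Let G = V ⋊ ℤ/mℤ be the semidirect product in which the generator 1 of ℤ/mℤ acts on V by u. Let χ: V → ℂˣ be a nontrivial character and let W be a finite-dimensional irreducible complex representation of G whose restriction to V contains χ (i.e. there is a nonzero w ∈ W with v·w = χ(v)·w for all v ∈ V). Then for every group homomorphism η: G → ℂˣ, the dual representation W^* is not isomorphic to η ⊗ W. -/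
open SemidirectProduct Multiplicative


/-- **(Chenevier–Clozel)** Let `p` be an odd prime, `V` a finite-dimensional
`𝔽_p`-vector space of dimension `> 1`, and `u ∈ GL(V)` of odd finite order `m` with no
nonzero fixed vector.  Let `G = V ⋊ ℤ/mℤ` be the semidirect product where the generator
`1` of `ℤ/mℤ` acts by `u`.  Let `χ : V → ℂˣ` be a nontrivial character and `W` a
finite-dimensional irreducible complex representation of `G` whose restriction to `V`
contains `χ`.  Then the dual `W^*` is not isomorphic to `η ⊗ W` for any character
`η : G → ℂˣ`. -/
theorem dual_not_twist_of_semidirect_product_rep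
    (p : ℕ) [Fact p.Prime] (hodd : Odd p)
    (V : Type) [AddCommGroup V] [Module (ZMod p) V] [FiniteDimensional (ZMod p) V]
    (hdim : 1 < Module.finrank (ZMod p) V)
    (u : V ≃ₗ[ZMod p] V) (m : ℕ) (hm : Odd m) (hord : orderOf u = m)
    (hfix : ∀ v : V, u v = v → v = 0)
    (φ : Multiplicative (ZMod m) →* MulAut (Multiplicative V))
    (hφ : ∀ v : V,
      φ (Multiplicative.ofAdd (1 : ZMod m)) (Multiplicative.ofAdd v) =
        Multiplicative.ofAdd (u v))
    (χ : Multiplicative V →* ℂˣ) (hχ : χ ≠ 1)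
    (W : Type) [AddCommGroup W] [Module ℂ W] [FiniteDimensional ℂ W] [Nontrivial W]
    (ρ : Representation ℂ (Multiplicative V ⋊[φ] Multiplicative (ZMod m)) W)
    (hirr : ∀ U : Submodule ℂ W,
      (∀ g : Multiplicative V ⋊[φ] Multiplicative (ZMod m), ∀ x ∈ U, ρ g x ∈ U) →
      U = ⊥ ∨ U = ⊤)
    (hw : ∃ w : W, w ≠ 0 ∧ ∀ v : V,
      ρ (SemidirectProduct.inl (Multiplicative.ofAdd v)) w =
        (χ (Multiplicative.ofAdd v) : ℂ) • w) :
    ∀ η : (Multiplicative V ⋊[φ] Multiplicative (ZMod m)) →* ℂˣ,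
      ¬ ∃ e : Module.Dual ℂ W ≃ₗ[ℂ] W,
        ∀ (g : Multiplicative V ⋊[φ] Multiplicative (ZMod m)) (f : Module.Dual ℂ W),
          e (ρ.dual g f) = (η g : ℂ) • ρ g (e f) := by
  intro η
  rintro ⟨e, he⟩
  obtain ⟨w, hw0, hwv⟩ := hw
  have : Finite V := Module.finite_of_finite (ZMod p)
  have : Fintype V := Fintype.ofFinite V
  -- basic character value facts
  set c : V → ℂ := fun v => (χ (Multiplicative.ofAdd v) : ℂ) with hcdef
  have hcne : ∀ v, c v ≠ 0 := fun v => Units.ne_zero _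
  have hcmul : ∀ a b, c (a + b) = c a * c b := by
    intro a b
    show ((χ (Multiplicative.ofAdd (a + b)) : ℂ)) = _
    rw [ofAdd_add, map_mul, Units.val_mul]
  have hc0 : c 0 = 1 := by
    show ((χ (Multiplicative.ofAdd (0 : V)) : ℂ)) = 1
    rw [ofAdd_zero, map_one, Units.val_one]
  have hcneg : ∀ a, c (-a) = (c a)⁻¹ := by
    intro a
    symm
    apply inv_eq_of_mul_eq_one_right
    rw [← hcmul, add_neg_cancel, hc0]
  -- p • arbitrary element of V is zero, hence c v ^ p = 1
  have hcn : ∀ (n : ℕ) (v : V), c (n • v) = c v ^ n := by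
    intro n v
    induction n with
    | zero => simp [hc0]
    | succ k ih => rw [succ_nsmul, hcmul, ih, pow_succ]
  have hcp : ∀ v : V, c v ^ p = 1 := by
    intro v
    have hpv : (p : ℕ) • v = 0 := by
      rw [← Nat.cast_smul_eq_nsmul (ZMod p), ZMod.natCast_self, zero_smul]
    rw [← hcn p v, hpv, hc0]
  -- abbreviation for ρ on inl of V
  set r : V → (W →ₗ[ℂ] W) := fun v => ρ (inl (Multiplicative.ofAdd v)) with hrdef
  have hrmul : ∀ a b (x : W), r a (r b x) = r (a + b) x := by
    intro a b x
    show ρ _ (ρ _ x) = ρ (inl (Multiplicative.ofAdd (a + b))) x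
    rw [ofAdd_add, map_mul, map_mul, Module.End.mul_apply]
  have hwv' : ∀ v, r v w = c v • w := hwv
  -- Step A : η is trivial on inl V
  have hη : ∀ v : V, η (inl (Multiplicative.ofAdd v)) = 1 := by
    intro v
    have hsurj : Function.Surjective (u.toLinearMap - LinearMap.id : V →ₗ[ZMod p] V) := by
      apply LinearMap.surjective_of_injective
      rw [← LinearMap.ker_eq_bot, LinearMap.ker_eq_bot']
      intro z hz
      simp only [LinearMap.sub_apply, LinearMap.id_apply, sub_eq_zero,
        LinearEquiv.coe_coe] at hz
      exact hfix z hz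
    obtain ⟨x, hx⟩ := hsurj v
    simp only [LinearMap.sub_apply, LinearMap.id_apply, LinearEquiv.coe_coe] at hx
    have h1 : Multiplicative.ofAdd v =
        φ (Multiplicative.ofAdd (1 : ZMod m)) (Multiplicative.ofAdd x) *
          (Multiplicative.ofAdd x)⁻¹ := by
      rw [hφ, ← ofAdd_neg, ← ofAdd_add, ← sub_eq_add_neg, hx]
    have h2 : (inl (Multiplicative.ofAdd v) : Multiplicative V ⋊[φ] Multiplicative (ZMod m)) =
        inr (Multiplicative.ofAdd (1 : ZMod m)) * inl (Multiplicative.ofAdd x) *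
          (inr (Multiplicative.ofAdd (1 : ZMod m)))⁻¹ * (inl (Multiplicative.ofAdd x))⁻¹ := by
      rw [h1, map_mul, map_inv, inl_aut, map_inv]
    rw [h2, map_mul, map_mul, map_mul, map_inv, map_inv, mul_assoc,
      mul_mul_mul_comm, mul_inv_cancel, mul_inv_cancel, one_mul]
  -- eigenvector property of orbit vectors
  have heig : ∀ (a : V) (t : Multiplicative (ZMod m)),
      r a (ρ (inr t) w) = (χ ((φ t⁻¹) (Multiplicative.ofAdd a)) : ℂ) • ρ (inr t) w := by
    intro a t
    have hgrp : (inl (Multiplicative.ofAdd a) : Multiplicative V ⋊[φ] Multiplicative (ZMod m))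
        * inr t = inr t * inl ((φ t⁻¹) (Multiplicative.ofAdd a)) := by
      rw [map_inv φ t, inl_aut_inv, ← mul_assoc, ← mul_assoc, ← map_mul,
        mul_inv_cancel, map_one, one_mul]
    have : r a (ρ (inr t) w) = ρ (inr t) (ρ (inl ((φ t⁻¹) (Multiplicative.ofAdd a))) w) := by
      show ρ _ (ρ _ w) = _
      rw [← Module.End.mul_apply, ← map_mul, hgrp, map_mul, Module.End.mul_apply]
    rw [this]
    have := hwv (Multiplicative.toAdd ((φ t⁻¹) (Multiplicative.ofAdd a)))
    rw [ofAdd_toAdd] at this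
    rw [this, map_smul]
  -- Step B : a dual eigenvector with character χ⁻¹
  obtain ⟨f₀, hf₀⟩ : ∃ f₀ : Module.Dual ℂ W, f₀ w ≠ 0 := by
    by_contra h
    push_neg at h
    exact hw0 ((Module.forall_dual_apply_eq_zero_iff ℂ w).mp h)
  set f : Module.Dual ℂ W := ∑ v : V, (c v)⁻¹ • (f₀ ∘ₗ r v) with hfdef
  have hcard : (Fintype.card V : ℂ) ≠ 0 := Nat.cast_ne_zero.mpr Fintype.card_ne_zero
  have hfw : f w = (Fintype.card V : ℂ) * f₀ w := by
    rw [hfdef, LinearMap.sum_apply]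
    have : ∀ v : V, ((c v)⁻¹ • (f₀ ∘ₗ r v)) w = f₀ w := by
      intro v
      simp only [LinearMap.smul_apply, LinearMap.comp_apply, hwv' v, map_smul,
        smul_eq_mul]
      rw [inv_mul_cancel_left₀ (hcne v)]
    rw [Finset.sum_congr rfl fun v _ => this v, Finset.sum_const, Finset.card_univ,
      nsmul_eq_mul]
  have hf0 : f ≠ 0 := by
    intro h
    apply mul_ne_zero hcard hf₀
    rw [← hfw, h]
    simp
  have hcomp : ∀ a : V, f ∘ₗ r a = c a • f := by
    intro a
    ext x
    simp only [LinearMap.comp_apply, LinearMap.smul_apply, hfdef, LinearMap.sum_apply,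
      smul_eq_mul, Finset.mul_sum]
    refine Fintype.sum_equiv (Equiv.addRight a) _ _ ?_
    intro v
    simp only [Equiv.coe_addRight, LinearMap.smul_apply, LinearMap.comp_apply,
      smul_eq_mul, hrmul]
    rw [hcmul, mul_inv]
    field_simp [hcne a, hcne v]
  have hfe : ∀ v : V, ρ.dual (inl (Multiplicative.ofAdd v)) f = (c v)⁻¹ • f := by
    intro v
    have : ρ.dual (inl (Multiplicative.ofAdd v)) f = f ∘ₗ r (-v) := by
      show f ∘ₗ ρ (inl (Multiplicative.ofAdd v))⁻¹ = _
      rw [← map_inv, ← ofAdd_neg]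
    rw [this, hcomp, hcneg]
  -- Step C : x := e f is an eigenvector with character χ⁻¹
  set x : W := e f with hxdef
  have hx0 : x ≠ 0 := fun h => hf0 (e.map_eq_zero_iff.mp h)
  have hxe : ∀ v : V, r v x = (c v)⁻¹ • x := by
    intro v
    have h := he (inl (Multiplicative.ofAdd v)) f
    rw [hfe v, map_smul, hη v, Units.val_one, one_smul] at h
    exact h.symm
  -- Step D : W is spanned by the orbit vectors
  set U : Submodule ℂ W :=
    Submodule.span ℂ (Set.range fun t : Multiplicative (ZMod m) => ρ (inr t) w) with hUdef
  have hwU : w ∈ U := by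
    have : w = ρ (inr (1 : Multiplicative (ZMod m))) w := by rw [map_one, map_one]; rfl
    rw [this]
    exact Submodule.subset_span ⟨1, rfl⟩
  have hUinv : ∀ g : Multiplicative V ⋊[φ] Multiplicative (ZMod m), ∀ y ∈ U, ρ g y ∈ U := by
    intro g y hy
    induction hy using Submodule.span_induction with
    | mem z hz =>
      obtain ⟨t, rfl⟩ := hz
      have hg : g = inl g.left * inr g.right := (inl_left_mul_inr_right g).symm
      rw [hg, map_mul, Module.End.mul_apply]
      have : ρ (inr g.right) (ρ (inr t) w) = ρ (inr (g.right * t)) w := by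
        rw [← Module.End.mul_apply, ← map_mul, ← map_mul]
      rw [this]
      have h2 := heig (Multiplicative.toAdd g.left) (g.right * t)
      simp only [hrdef, ofAdd_toAdd] at h2
      rw [h2]
      exact Submodule.smul_mem _ _ (Submodule.subset_span ⟨g.right * t, rfl⟩)
    | zero => rw [map_zero]; exact Submodule.zero_mem _
    | add a b _ _ ha hb => rw [map_add]; exact Submodule.add_mem _ ha hb
    | smul a z _ hz => rw [map_smul]; exact Submodule.smul_mem _ _ hz
  have hUtop : U = ⊤ := by
    rcases hirr U hUinv with h | h
    · exfalso
      rw [h] at hwU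
      exact hw0 ((Submodule.mem_bot ℂ).mp hwU)
    · exact h
  -- Step E : projector onto the χ⁻¹ eigenspace
  set P : W →ₗ[ℂ] W := ∑ v : V, c v • r v with hPdef
  have hPx : P x = (Fintype.card V : ℂ) • x := by
    rw [hPdef, LinearMap.sum_apply]
    have : ∀ v : V, (c v • r v) x = x := by
      intro v
      simp only [LinearMap.smul_apply, hxe v, smul_smul]
      rw [mul_inv_cancel₀ (hcne v), one_smul]
    rw [Finset.sum_congr rfl fun v _ => this v, Finset.sum_const, Finset.card_univ]
    exact (Nat.cast_smul_eq_nsmul ℂ _ _).symm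
  by_cases hT : ∃ t : Multiplicative (ZMod m),
      ∀ a : V, (χ ((φ t⁻¹) (Multiplicative.ofAdd a)) : ℂ) = (c a)⁻¹
  · -- Step F : arithmetic contradiction with hχ
    obtain ⟨t, ht⟩ := hT
    set s := t⁻¹ with hsdef
    have H2 : ∀ a : V, (χ ((φ (s * s)) (Multiplicative.ofAdd a)) : ℂ) = c a := by
      intro a
      have h1 : (φ (s * s)) (Multiplicative.ofAdd a)
          = (φ s) ((φ s) (Multiplicative.ofAdd a)) := by rw [map_mul]; rfl
      rw [h1]
      have h2 := ht (Multiplicative.toAdd ((φ s) (Multiplicative.ofAdd a)))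
      rw [ofAdd_toAdd] at h2
      rw [h2]
      have h3 : c (Multiplicative.toAdd ((φ s) (Multiplicative.ofAdd a)))
          = (c a)⁻¹ := by
        have := ht a
        rw [hcdef]
        simp only [ofAdd_toAdd]
        exact this
      rw [h3, inv_inv]
    have Hk : ∀ (k : ℕ) (a : V), (χ ((φ ((s * s) ^ k)) (Multiplicative.ofAdd a)) : ℂ) = c a := by
      intro k
      induction k with
      | zero => intro a; rw [pow_zero, map_one]; rfl
      | succ n ih =>
        intro a
        have h1 : (φ ((s * s) ^ (n + 1))) (Multiplicative.ofAdd a)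
            = (φ ((s * s) ^ n)) ((φ (s * s)) (Multiplicative.ofAdd a)) := by
          rw [pow_succ, map_mul]; rfl
        rw [h1]
        have h2 := ih (Multiplicative.toAdd ((φ (s * s)) (Multiplicative.ofAdd a)))
        rw [ofAdd_toAdd] at h2
        rw [h2]
        have := H2 a
        rw [hcdef] at this ⊢
        simp only [ofAdd_toAdd]
        exact this
    -- choose k with (s*s)^k = s
    obtain ⟨j, hj⟩ := hm
    have hsm : s ^ m = 1 := by
      have : (Multiplicative.toAdd s) = Multiplicative.toAdd s := rfl
      rw [← ofAdd_toAdd s, ← ofAdd_nsmul]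
      have : m • (Multiplicative.toAdd s) = 0 := by
        rw [nsmul_eq_mul]
        simp [ZMod.natCast_self]
      rw [this, ofAdd_zero]
    have hpow : (s * s) ^ (j + 1) = s := by
      have : (s * s) ^ (j + 1) = s ^ (2 * (j + 1)) := by
        rw [← sq, ← pow_mul]
      rw [this]
      have h2m : 2 * (j + 1) = m + 1 := by omega
      rw [h2m, pow_succ, hsm, one_mul]
    have Hs : ∀ a : V, (χ ((φ s) (Multiplicative.ofAdd a)) : ℂ) = c a := by
      intro a
      have := Hk (j + 1) a
      rw [hpow] at this
      exact this
    have hsq : ∀ a : V, c a ^ 2 = 1 := by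
      intro a
      have h1 := ht a
      rw [Hs a] at h1
      -- h1 : c a = (c a)⁻¹
      rw [sq]
      nth_rewrite 1 [h1]
      rw [inv_mul_cancel₀ (hcne a)]
    -- combine with c a ^ p = 1 and p odd
    have hcall : ∀ a : V, c a = 1 := by
      intro a
      obtain ⟨i, hi⟩ := hodd
      have : c a ^ p = c a := by
        rw [hi, pow_succ, pow_mul, hsq a, one_pow, one_mul]
      rw [hcp a] at this
      exact this.symm
    apply hχ
    refine MonoidHom.ext fun y => Units.ext ?_
    have := hcall (Multiplicative.toAdd y)
    simp only [hcdef, ofAdd_toAdd] at this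
    simpa only [MonoidHom.one_apply, Units.val_one, ofAdd_toAdd] using this
  · -- otherwise P kills all generators, contradicting P x ≠ 0
    push_neg at hT
    have hPgen : ∀ t : Multiplicative (ZMod m), P (ρ (inr t) w) = 0 := by
      intro t
      have hform : P (ρ (inr t) w)
          = (∑ v : V, c v * (χ ((φ t⁻¹) (Multiplicative.ofAdd v)) : ℂ)) • ρ (inr t) w := by
        rw [hPdef, LinearMap.sum_apply, Finset.sum_smul]
        refine Finset.sum_congr rfl fun v _ => ?_
        rw [LinearMap.smul_apply, heig v t, smul_smul]
      rw [hform]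
      -- the character v ↦ c v * χ(φ t⁻¹ v) is nontrivial hence sums to zero
      obtain ⟨v₁, hv₁⟩ := hT t
      set θ : V → ℂ := fun v => c v * (χ ((φ t⁻¹) (Multiplicative.ofAdd v)) : ℂ) with hθdef
      have hθmul : ∀ a b, θ (a + b) = θ a * θ b := by
        intro a b
        simp only [hθdef, hcmul, ofAdd_add, map_mul, Units.val_mul]
        ring
      have hθv₁ : θ v₁ ≠ 1 := by
        intro h
        have h' : c v₁ * (χ ((φ t⁻¹) (Multiplicative.ofAdd v₁)) : ℂ) = 1 := h
        rw [mul_comm] at h'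
        exact hv₁ (eq_inv_of_mul_eq_one_left h')
      have hsum : ∑ v : V, θ v = 0 := by
        have key : θ v₁ * ∑ v : V, θ v = ∑ v : V, θ v := by
          rw [Finset.mul_sum]
          refine Fintype.sum_equiv (Equiv.addLeft v₁) _ _ fun v => ?_
          simp only [Equiv.coe_addLeft]
          exact (hθmul v₁ v).symm
        have hz : (θ v₁ - 1) * ∑ v : V, θ v = 0 := by
          rw [sub_mul, one_mul, key, sub_self]
        rcases mul_eq_zero.mp hz with h | h
        · exact absurd (sub_eq_zero.mp h) hθv₁
        · exact h
      rw [hsum, zero_smul]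
    have : P x = 0 := by
      have hle : U ≤ LinearMap.ker P := by
        rw [hUdef, Submodule.span_le]
        rintro _ ⟨t, rfl⟩
        exact hPgen t
      have : x ∈ LinearMap.ker P := hle (hUtop ▸ Submodule.mem_top)
      exact this
    rw [hPx] at this
    exact hx0 ((smul_eq_zero.mp this).resolve_left hcard)
end
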